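/- arXiv:2209.04905 — 6 statements merged into one kernel-verified Lean document; each statement's English description precedes it below -/
import Mathlib

section
/- If λ is an admissible Dyck word with red(λ) = 1, then red((λ ρ*(λ))^j) = 1 for all j ≥ 1; and if red(λ) = ξη with ξ a word in right brackets and η a word in left brackets, then red((λ ρ*(λ))^j) = ξ ρ*(ξ) for all j ≥ 1. -/
/-- The Dyck alphabet on `2m` symbols: `Sum.inl i` is the left bracket `αᵢ`,
`Sum.inr i` is the right bracket `βᵢ`. -/
abbrev Letter (m : ℕ) := Fin m ⊕ Fin m

/-- One step of stack-based reduction in the Dyck monoid with zero.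
The state `some s` records the reduced (normal-form) word, stored reversed
(head of `s` = last letter of the normal form); `none` represents the zero
element of the monoid. -/
def dyckStep (m : ℕ) : Option (List (Letter m)) → Letter m → Option (List (Letter m))
  | none, _ => none
  | some s, Sum.inl i => some (Sum.inl i :: s)
  | some s, Sum.inr j =>
      match s with
      | Sum.inl i :: t => if i = j then some t else none
      | _ => some (Sum.inr j :: s)

/-- The reduction `red` of a word in the Dyck monoid with zero:
`none` is the zero element, `some s` is the reduced word (stored reversed),
and `some []` is the unit `1`. -/
def red {m : ℕ} (w : List (Letter m)) : Option (List (Letter m)) :=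
  w.foldl (dyckStep m) (some [])

/-- A word is admissible in the Dyck shift iff its reduction is nonzero. -/
def DyckAdmissible {m : ℕ} (w : List (Letter m)) : Prop := red w ≠ none

/-- Reversal-with-swap `ρ*` of a word: reverse the word and swap each
left bracket with the corresponding right bracket. -/
def rhoStar {m : ℕ} (w : List (Letter m)) : List (Letter m) :=
  (w.map Sum.swap).reverse

/-- The finite subword `ω_i ω_{i+1} ⋯ ω_{i+n-1}` of a two-sided sequence. -/
def wordAt {m : ℕ} (ω : ℤ → Letter m) (i : ℤ) (n : ℕ) : List (Letter m) :=
  List.ofFn fun k : Fin n => ω (i + k)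

/-- Membership in the two-sided Dyck shift: every finite subword is admissible. -/
def DyckSeq {m : ℕ} (ω : ℤ → Letter m) : Prop :=
  ∀ (i : ℤ) (n : ℕ), DyckAdmissible (wordAt ω i n)

namespace DyckAux
variable {m : ℕ}

lemma foldl_none (v : List (Letter m)) : v.foldl (dyckStep m) none = none := by
  induction v with
  | nil => rfl
  | cons a v ih => simpa [dyckStep] using ih

lemma red_append (u v : List (Letter m)) :
    red (u ++ v) = v.foldl (dyckStep m) (red u) := by
  simp [red, List.foldl_append]

lemma push (l : List (Fin m)) (r : List (Letter m)) :
    (l.map Sum.inl).foldl (dyckStep m) (some r)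
      = some (l.reverse.map Sum.inl ++ r) := by
  induction l generalizing r with
  | nil => simp
  | cons i l ih => simp [dyckStep, ih]

lemma pop (l : List (Fin m)) (r : List (Letter m)) :
    (l.map Sum.inr).foldl (dyckStep m) (some (l.map Sum.inl ++ r)) = some r := by
  induction l with
  | nil => rfl
  | cons i l ih => simpa [dyckStep] using ih

lemma cancel_pair (i : Fin m) (X : Option (List (Letter m))) :
    [Sum.inl i, Sum.inr i].foldl (dyckStep m) X = X := by
  cases X <;> simp [dyckStep]

lemma mismatch_pair {i j : Fin m} (h : i ≠ j) (X : Option (List (Letter m))) :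
    [Sum.inl i, Sum.inr j].foldl (dyckStep m) X = none := by
  cases X <;> simp [dyckStep, h]

lemma main (u : List (Letter m)) :
    (red u = none ∧ ∀ t, u.foldl (dyckStep m) (some t) = none) ∨
    ∃ A B : List (Fin m),
      red u = some (A.map Sum.inl ++ B.map Sum.inr) ∧
      ∀ t, u.foldl (dyckStep m) (some t)
          = (A.map Sum.inl ++ B.map Sum.inr).reverse.foldl (dyckStep m) (some t) := by
  induction u using List.reverseRecOn with
  | nil => exact Or.inr ⟨[], [], rfl, fun t => rfl⟩
  | append_singleton u a ih =>
    rcases ih with ⟨h0, h1⟩ | ⟨A, B, h0, h1⟩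
    · left
      refine ⟨?_, fun t => ?_⟩
      · rw [red_append, h0, foldl_none]
      · rw [List.foldl_append, h1, foldl_none]
    · have hred : red (u ++ [a])
          = dyckStep m (some (A.map Sum.inl ++ B.map Sum.inr)) a := by
        rw [red_append, h0]; rfl
      have hfold : ∀ t, (u ++ [a]).foldl (dyckStep m) (some t)
          = ((A.map Sum.inl ++ B.map Sum.inr).reverse ++ [a]).foldl (dyckStep m) (some t) := by
        intro t
        rw [List.foldl_append, h1, ← List.foldl_append]
      cases a with
      | inl i =>
        right
        refine ⟨i :: A, B, ?_, fun t => ?_⟩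
        · rw [hred]; rfl
        · rw [hfold]; simp
      | inr j =>
        cases A with
        | nil =>
          right
          refine ⟨[], j :: B, ?_, fun t => ?_⟩
          · rw [hred]; cases B <;> rfl
          · rw [hfold]; simp
        | cons i A' =>
          by_cases hij : i = j
          · subst hij
            right
            refine ⟨A', B, ?_, fun t => ?_⟩
            · rw [hred]; simp [dyckStep]
            · rw [hfold]
              have : ((i :: A').map Sum.inl ++ B.map Sum.inr).reverse ++ [Sum.inr i]
                  = (A'.map Sum.inl ++ B.map Sum.inr).reverse
                      ++ [Sum.inl i, Sum.inr i] := by simp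
              rw [this, List.foldl_append, cancel_pair]
          · left
            refine ⟨?_, fun t => ?_⟩
            · rw [hred]; simp [dyckStep, hij]
            · rw [hfold]
              have : ((i :: A').map Sum.inl ++ B.map Sum.inr).reverse ++ [Sum.inr j]
                  = (A'.map Sum.inl ++ B.map Sum.inr).reverse
                      ++ [Sum.inl i, Sum.inr j] := by simp
              rw [this, List.foldl_append, mismatch_pair hij]

lemma act_red {u : List (Letter m)} {s : List (Letter m)} (h : red u = some s) (t) :
    u.foldl (dyckStep m) (some t) = s.reverse.foldl (dyckStep m) (some t) := by
  rcases main u with ⟨h0, _⟩ | ⟨A, B, h0, h1⟩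
  · rw [h0] at h; cases h
  · rw [h0] at h
    injection h with h
    rw [← h]; exact h1 t

lemma rho_act : ∀ (u : List (Letter m)) {s : List (Letter m)}, red u = some s → ∀ t,
    (rhoStar u).foldl (dyckStep m) (some t)
      = (rhoStar s.reverse).foldl (dyckStep m) (some t) := by
  intro u
  induction u using List.reverseRecOn with
  | nil =>
    intro s h t
    have : s = [] := by simpa [red] using h.symm
    subst this; rfl
  | append_singleton u a ih =>
    intro s h t
    rw [red_append] at h
    cases hred' : red u with
    | none => rw [hred', foldl_none] at h; cases h
    | some s' =>
      rw [hred'] at h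
      have IH : ∀ X : Option (List (Letter m)),
          (rhoStar u).foldl (dyckStep m) X
            = (rhoStar s'.reverse).foldl (dyckStep m) X := by
        intro X
        cases X with
        | none => rw [foldl_none, foldl_none]
        | some t' => exact ih hred' t'
      have hrw : rhoStar (u ++ [a]) = Sum.swap a :: rhoStar u := by
        simp [rhoStar]
      have hrw2 : ∀ (c : Letter m) (l : List (Letter m)),
          rhoStar ((c :: l).reverse) = Sum.swap c :: rhoStar l.reverse := by
        intro c l; simp [rhoStar]
      match a with
      | Sum.inl i =>
        have hs : s = Sum.inl i :: s' := by
          simp only [List.foldl_cons, List.foldl_nil, dyckStep] at h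
          exact (Option.some_injective _ h).symm
        subst hs
        rw [hrw, hrw2]
        simp only [Sum.swap_inl, List.foldl_cons]
        exact IH _
      | Sum.inr j =>
        match s' with
        | [] =>
          have hs : s = [Sum.inr j] := by
            simp only [List.foldl_cons, List.foldl_nil, dyckStep] at h
            exact (Option.some_injective _ h).symm
          subst hs
          rw [hrw]
          simp only [Sum.swap_inr, List.foldl_cons]
          rw [IH]
          simp [rhoStar, dyckStep]
        | Sum.inl i :: s'' =>
          by_cases hij : i = j
          · subst hij
            have hs : s = s'' := by
              simp only [List.foldl_cons, List.foldl_nil, dyckStep, if_pos rfl] at h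
              exact (Option.some_injective _ h).symm
            subst hs
            rw [hrw]
            simp only [Sum.swap_inr, List.foldl_cons]
            rw [show dyckStep m (some t) (Sum.inl i) = some (Sum.inl i :: t) from rfl]
            rw [IH, hrw2]
            simp [dyckStep]
          · exfalso
            simp only [List.foldl_cons, List.foldl_nil, dyckStep, if_neg hij] at h
            cases h
        | Sum.inr b :: s'' =>
          have hs : s = Sum.inr j :: Sum.inr b :: s'' := by
            simp only [List.foldl_cons, List.foldl_nil, dyckStep] at h
            exact (Option.some_injective _ h).symm
          subst hs
          rw [hrw, hrw2]
          simp only [Sum.swap_inr, List.foldl_cons]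
          exact IH _

end DyckAux

namespace DyckAux2
open DyckAux
variable {m : ℕ}

lemma key {w : List (Letter m)} (ξ η : List (Fin m))
    (h : red w = some ((ξ.map Sum.inr ++ η.map Sum.inl : List (Letter m)).reverse)) :
    ∀ j : ℕ, 1 ≤ j → red ((List.replicate j (w ++ rhoStar w)).flatten)
      = some ((ξ.map Sum.inl : List (Letter m)) ++ ξ.reverse.map Sum.inr) := by
  set S : List (Letter m) := η.reverse.map Sum.inl ++ ξ.reverse.map Sum.inr with hS
  set T : List (Letter m) := ξ.map Sum.inl ++ ξ.reverse.map Sum.inr with hT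
  have hs : ((ξ.map Sum.inr ++ η.map Sum.inl : List (Letter m))).reverse = S := by
    simp [hS]
  rw [hs] at h
  have hrev : S.reverse = (ξ.map Sum.inr ++ η.map Sum.inl : List (Letter m)) := by
    simp [hS]
  have hE : (rhoStar w).foldl (dyckStep m) (some S) = some T := by
    rw [rho_act w h S, hrev]
    have : rhoStar (ξ.map Sum.inr ++ η.map Sum.inl : List (Letter m))
        = (η.reverse.map Sum.inr ++ ξ.reverse.map Sum.inl : List (Letter m)) := by
      simp [rhoStar, Function.comp_def]
    rw [this, List.foldl_append]
    rw [show (some S : Option (List (Letter m)))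
        = some (η.reverse.map Sum.inl ++ ξ.reverse.map Sum.inr) from rfl]
    rw [pop, push]
    simp [hT]
  have hF : w.foldl (dyckStep m) (some T) = some S := by
    rw [act_red h T, hrev, List.foldl_append]
    rw [show (some T : Option (List (Letter m)))
        = some (ξ.map Sum.inl ++ ξ.reverse.map Sum.inr) from rfl]
    rw [pop, push]
  have hG : (w ++ rhoStar w).foldl (dyckStep m) (some T) = some T := by
    rw [List.foldl_append, hF]; exact hE
  have hH : red (w ++ rhoStar w) = some T := by
    rw [red_append, h]; exact hE
  have hrep : ∀ j : ℕ,
      ((List.replicate j (w ++ rhoStar w)).flatten).foldl (dyckStep m) (some T) = some T := by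
    intro j
    induction j with
    | zero => rfl
    | succ k ih =>
      rw [List.replicate_succ, List.flatten_cons, List.foldl_append, hG, ih]
  intro j hj
  obtain ⟨k, rfl⟩ : ∃ k, j = k + 1 := ⟨j - 1, (Nat.succ_pred_eq_of_pos hj).symm⟩
  rw [List.replicate_succ, List.flatten_cons, red_append, hH, hrep k]

end DyckAux2

theorem red_aux {m : ℕ} (hm : 2 ≤ m) (w : List (Letter m)) :
    (red w = some [] → ∀ j : ℕ, 1 ≤ j →
        red ((List.replicate j (w ++ rhoStar w)).flatten) = some []) ∧
    ∀ (s : List (Letter m)) (ξ η : List (Fin m)),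
      red w = some s → s.reverse = ξ.map Sum.inr ++ η.map Sum.inl →
      ∀ j : ℕ, 1 ≤ j →
        red ((List.replicate j (w ++ rhoStar w)).flatten)
          = some ((ξ.map Sum.inr ++ (ξ.reverse.map Sum.inl : List (Letter m))).reverse) := by
  constructor
  · intro h1 j hj
    have := DyckAux2.key (w := w) [] [] (by simpa using h1) j hj
    simpa using this
  · intro s ξ η hs hξη j hj
    have hw' : red w = some ((ξ.map Sum.inr ++ η.map Sum.inl : List (Letter m)).reverse) := by
      rw [hs, ← hξη, List.reverse_reverse]
    have := DyckAux2.key ξ η hw' j hj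
    rw [this]
    congr 1
    simp


/-- If `red w = 1` then `red((w ρ*(w))^j) = 1` for all `j ≥ 1`;
and if the reduced word of `w` is `ξη` (with `ξ` in right brackets, `η` in left
brackets), then the reduced word of `(w ρ*(w))^j` is `ξ ρ*(ξ)` for all `j ≥ 1`. -/
theorem red_of_periodic_word {m : ℕ} (hm : 2 ≤ m) (w : List (Letter m))
    (hw : DyckAdmissible w) :
    (red w = some [] → ∀ j : ℕ, 1 ≤ j →
        red ((List.replicate j (w ++ rhoStar w)).flatten) = some []) ∧
    ∀ (s : List (Letter m)) (ξ η : List (Fin m)),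
      red w = some s → s.reverse = ξ.map Sum.inr ++ η.map Sum.inl →
      ∀ j : ℕ, 1 ≤ j →
        red ((List.replicate j (w ++ rhoStar w)).flatten)
          = some ((ξ.map Sum.inr ++ (ξ.reverse.map Sum.inl : List (Letter m))).reverse) := by
  exact red_aux hm w
end

section
/- The follower set graph of the one-sided Dyck shift has vertex set {Θ^ξ : ξ a finite word in the left brackets α₁,...,α_m}, and for any such ξ and any i ∈ {1,...,m}: Θ^{ξ α_i β_i} = Θ^ξ, and Θ^{β_i} = Θ^∅ (the follower set of any single right bracket equals the follower set of the empty word). -/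
/-- Finite subwords of a one-sided sequence. -/
def wordAtN {m : ℕ} (ω : ℕ → Letter m) (i n : ℕ) : List (Letter m) :=
  List.ofFn fun k : Fin n => ω (i + k)

/-- Membership in the one-sided Dyck shift `Σ_D⁺`. -/
def DyckSeqPlus {m : ℕ} (ω : ℕ → Letter m) : Prop :=
  ∀ (i n : ℕ), DyckAdmissible (wordAtN ω i n)

/-- The concatenation `ξη` of a finite word `ξ` with a one-sided sequence `η`. -/
def prependWord {m : ℕ} (ξ : List (Letter m)) (η : ℕ → Letter m) : ℕ → Letter m :=
  fun n => if h : n < ξ.length then ξ.get ⟨n, h⟩ else η (n - ξ.length)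

/-- The follower set `Θ^ξ = {η ∈ Σ_D⁺ : ξη ∈ Σ_D⁺}` of a word `ξ`. -/
def followerSet {m : ℕ} (ξ : List (Letter m)) : Set (ℕ → Letter m) :=
  {η | DyckSeqPlus (prependWord ξ η)}



section DyckAux
variable {m : ℕ}

lemma foldl_none (w : List (Letter m)) : w.foldl (dyckStep m) none = none := by
  induction w with
  | nil => rfl
  | cons a t ih => simpa [dyckStep] using ih

lemma red_append (u v : List (Letter m)) : red (u ++ v) = v.foldl (dyckStep m) (red u) := by
  simp [red, List.foldl_append]

lemma foldl_cancel (X : Option (List (Letter m))) (i : Fin m) (y : List (Letter m)) :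
    (Sum.inl i :: Sum.inr i :: y).foldl (dyckStep m) X = y.foldl (dyckStep m) X := by
  cases X with
  | none => simp [dyckStep]
  | some s => simp [dyckStep]

lemma red_cancel (x y : List (Letter m)) (i : Fin m) :
    red (x ++ Sum.inl i :: Sum.inr i :: y) = red (x ++ y) := by
  rw [red_append, red_append, foldl_cancel]

lemma foldl_inr_aux (k : Fin m) (B' : List (Letter m)) (y : List (Letter m))
    (t : List (Letter m)) :
    y.foldl (dyckStep m) (some (t ++ (Sum.inr k :: B'))) =
      (y.foldl (dyckStep m) (some t)).map (· ++ (Sum.inr k :: B')) := by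
  induction y generalizing t with
  | nil => simp
  | cons a y ih =>
    cases a with
    | inl i =>
      rw [List.foldl_cons, List.foldl_cons]
      show y.foldl (dyckStep m) (some ((Sum.inl i :: t) ++ _)) = _
      rw [ih]
      rfl
    | inr j =>
      rw [List.foldl_cons, List.foldl_cons]
      match t with
      | [] =>
        show y.foldl (dyckStep m) (some (Sum.inr j :: Sum.inr k :: B')) = _
        have := ih [Sum.inr j]
        simpa [dyckStep] using this
      | Sum.inl i :: t' =>
        show y.foldl (dyckStep m)
            (dyckStep m (some (Sum.inl i :: (t' ++ _))) (Sum.inr j)) = _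
        by_cases h : i = j
        · simp only [dyckStep, if_pos h]
          exact ih t'
        · simp only [dyckStep, if_neg h]
          simp [foldl_none]
      | Sum.inr k' :: t' =>
        show y.foldl (dyckStep m) (some (Sum.inr j :: ((Sum.inr k' :: t') ++ _))) = _
        have := ih (Sum.inr j :: Sum.inr k' :: t')
        simpa [dyckStep] using this

lemma foldl_inr (y : List (Letter m)) (B : List (Letter m))
    (hB : ∀ x ∈ B, ∃ j, x = Sum.inr j) (t : List (Letter m)) :
    y.foldl (dyckStep m) (some (t ++ B)) = (y.foldl (dyckStep m) (some t)).map (· ++ B) := by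
  match B, hB with
  | [], _ => simp
  | Sum.inr k :: B', _ => exact foldl_inr_aux k B' y t
  | Sum.inl k :: B', hB => 
    obtain ⟨j', hj⟩ := hB (Sum.inl k) (by simp)
    exact absurd hj (by simp)

lemma red_prefix (u v : List (Letter m)) (h : red (u ++ v) ≠ none) : red u ≠ none := by
  intro hu
  apply h
  rw [red_append, hu, foldl_none]

lemma wordAtN_congr {ω ω' : ℕ → Letter m} {i i' : ℕ} (n : ℕ)
    (h : ∀ k, k < n → ω (i + k) = ω' (i' + k)) : wordAtN ω i n = wordAtN ω' i' n := by
  unfold wordAtN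
  exact congrArg List.ofFn (funext fun k => h k k.2)

lemma wordAtN_split (ω : ℕ → Letter m) (i a b : ℕ) :
    wordAtN ω i (a + b) = wordAtN ω i a ++ wordAtN ω (i + a) b := by
  unfold wordAtN
  rw [List.ofFn_add]
  congr 1
  all_goals exact congrArg List.ofFn (funext fun k => by simp [add_assoc])

lemma adm_mono {ω : ℕ → Letter m} {i a b : ℕ} (hab : a ≤ b)
    (h : red (wordAtN ω i b) ≠ none) : red (wordAtN ω i a) ≠ none := by
  obtain ⟨c, rfl⟩ := Nat.exists_eq_add_of_le hab
  rw [wordAtN_split] at h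
  exact red_prefix _ _ h

lemma prepend_lt (ξ : List (Letter m)) (η : ℕ → Letter m) {k : ℕ} (h : k < ξ.length) :
    prependWord ξ η k = ξ.get ⟨k, h⟩ := dif_pos h

lemma prepend_ge (ξ : List (Letter m)) (η : ℕ → Letter m) {k : ℕ} (h : ξ.length ≤ k) :
    prependWord ξ η k = η (k - ξ.length) := dif_neg (by omega)

lemma prepend_cons (x : Letter m) (w : List (Letter m)) (η : ℕ → Letter m) (k : ℕ) :
    prependWord (x :: w) η (k + 1) = prependWord w η k := by
  by_cases h : k < w.length
  · rw [prepend_lt (x :: w) η (by simpa using Nat.succ_lt_succ h), prepend_lt w η h]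
    simp
  · rw [prepend_ge (x :: w) η (by simp; omega), prepend_ge w η (by omega)]
    congr 1
    simp only [List.length_cons]
    omega

lemma prepend_zero (x : Letter m) (w : List (Letter m)) (η : ℕ → Letter m) :
    prependWord (x :: w) η 0 = x := by
  rw [prepend_lt (x :: w) η (by simp)]
  rfl

lemma prepend_append (u v : List (Letter m)) (η : ℕ → Letter m) (t : ℕ) :
    prependWord (u ++ v) η (u.length + t) = prependWord v η t := by
  induction u with
  | nil => simp
  | cons a u ih =>
    have h : (a :: u).length + t = (u.length + t) + 1 := by simp; omega
    rw [h]
    show prependWord (a :: (u ++ v)) η ((u.length + t) + 1) = _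
    rw [prepend_cons, ih]

lemma wordAt_tail (ξ : List (Letter m)) (η : ℕ → Letter m) (t n : ℕ) :
    wordAtN (prependWord ξ η) (ξ.length + t) n = wordAtN η t n := by
  apply wordAtN_congr
  intro k hk
  rw [prepend_ge ξ η (by omega)]
  congr 1
  omega

lemma wordAt_inside (ξ : List (Letter m)) (η : ℕ → Letter m) (j c : ℕ) (h : j + c ≤ ξ.length) :
    wordAtN (prependWord ξ η) j c = (ξ.drop j).take c := by
  apply List.ext_getElem
  · simp only [wordAtN, List.length_ofFn, List.length_take, List.length_drop]
    omega
  · intro k h1 h2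
    simp only [wordAtN, List.getElem_ofFn, List.getElem_take, List.getElem_drop]
    have h1' : k < c := by simpa [wordAtN] using h1
    rw [prepend_lt ξ η (by omega)]
    rfl

lemma red_cons_inr (j : Fin m) (y : List (Letter m)) :
    red (Sum.inr j :: y) = (red y).map (· ++ [Sum.inr j]) := by
  have h1 : red (Sum.inr j :: y) = y.foldl (dyckStep m) (some ([] ++ [Sum.inr j])) := rfl
  rw [h1, foldl_inr y [Sum.inr j] (by simp) []]
  rfl

lemma wordAt_cons_shift (x : Letter m) (w : List (Letter m)) (η : ℕ → Letter m) (i n : ℕ) :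
    wordAtN (prependWord (x :: w) η) (i + 1) n = wordAtN (prependWord w η) i n := by
  apply wordAtN_congr
  intro k hk
  have h : i + 1 + k = (i + k) + 1 := by omega
  rw [h, prepend_cons]

lemma wordAtN_succ (ω : ℕ → Letter m) (i n : ℕ) :
    wordAtN ω i (n+1) = ω i :: wordAtN ω (i+1) n := by
  unfold wordAtN
  rw [List.ofFn_succ]
  refine congrArg₂ List.cons (by simp) (congrArg List.ofFn (funext fun k => ?_))
  show ω (i + ((k : ℕ) + 1)) = ω (i + 1 + (k : ℕ))
  congr 1
  omega

lemma follower_cons_inr (j : Fin m) (w : List (Letter m)) :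
    followerSet (Sum.inr j :: w) = followerSet w := by
  ext η
  simp only [followerSet, Set.mem_setOf_eq, DyckSeqPlus, DyckAdmissible]
  constructor
  · intro H i n
    have h := H (i + 1) n
    rwa [wordAt_cons_shift] at h
  · intro H i n
    cases i with
    | zero =>
      cases n with
      | zero => simp [wordAtN, red, List.foldl]
      | succ n' =>
        rw [wordAtN_succ, prepend_zero]
        have h1 : wordAtN (prependWord (Sum.inr j :: w) η) 1 n' =
            wordAtN (prependWord w η) 0 n' := by
          simpa using wordAt_cons_shift (Sum.inr j) w η 0 n'
        rw [h1, red_cons_inr]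
        simp only [ne_eq, Option.map_eq_none_iff]
        exact H 0 n'
    | succ i' =>
      rw [wordAt_cons_shift]
      exact H i' n

lemma D_pt (u w : List (Letter m)) (i : Fin m) (η : ℕ → Letter m) (k : ℕ) :
    prependWord (u ++ Sum.inl i :: Sum.inr i :: w) η (u.length + 2 + k) =
      prependWord (u ++ w) η (u.length + k) := by
  have h1 : u.length + 2 + k = u.length + ((k + 1) + 1) := by omega
  rw [h1, prepend_append, prepend_append]
  show prependWord (Sum.inl i :: (Sum.inr i :: w)) η ((k + 1) + 1) = _
  rw [prepend_cons]
  show prependWord (Sum.inr i :: w) η (k + 1) = _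
  rw [prepend_cons]

lemma D_shift (u w : List (Letter m)) (i : Fin m) (η : ℕ → Letter m) (t n : ℕ) :
    wordAtN (prependWord (u ++ Sum.inl i :: Sum.inr i :: w) η) (u.length + 2 + t) n =
      wordAtN (prependWord (u ++ w) η) (u.length + t) n := by
  apply wordAtN_congr
  intro k hk
  have h1 : u.length + 2 + t + k = u.length + 2 + (t + k) := by omega
  have h2 : u.length + t + k = u.length + (t + k) := by omega
  rw [h1, h2, D_pt]

lemma D_drop (u w : List (Letter m)) (η : ℕ → Letter m) (j : ℕ) (hj : j ≤ u.length) :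
    wordAtN (prependWord (u ++ w) η) j (u.length - j) = u.drop j := by
  rw [wordAt_inside (u ++ w) η j (u.length - j) (by simp; omega)]
  rw [List.drop_append_of_le_length hj]
  exact List.take_left' (by simp [List.length_drop])

lemma D_key (u w : List (Letter m)) (i : Fin m) (η : ℕ → Letter m) (j r : ℕ)
    (hj : j ≤ u.length) :
    red (wordAtN (prependWord (u ++ Sum.inl i :: Sum.inr i :: w) η) j
        ((u.length - j) + (2 + r))) =
      red (wordAtN (prependWord (u ++ w) η) j ((u.length - j) + r)) := by
  set ξ := u ++ Sum.inl i :: Sum.inr i :: w with hξ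
  set φ := prependWord ξ η with hφ
  set ψ := prependWord (u ++ w) η with hψ
  have hju : j + (u.length - j) = u.length := by omega
  have e1 : wordAtN φ j (u.length - j) = u.drop j := D_drop u _ η j hj
  have e1' : wordAtN ψ j (u.length - j) = u.drop j := D_drop u w η j hj
  have e3 : wordAtN φ u.length 2 = [Sum.inl i, Sum.inr i] := by
    rw [wordAt_inside ξ η u.length 2 (by simp [hξ])]
    rw [hξ, List.drop_left]
    rfl
  have e4 : wordAtN φ (u.length + 2) r = wordAtN ψ u.length r := by
    have := D_shift u w i η 0 r
    simpa using this
  rw [wordAtN_split φ j (u.length - j) (2 + r), hju,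
      wordAtN_split φ u.length 2 r, e1, e3, e4,
      wordAtN_split ψ j (u.length - j) r, hju, e1']
  exact red_cancel (u.drop j) (wordAtN ψ u.length r) i

lemma D_mid (u w : List (Letter m)) (i : Fin m) (η : ℕ → Letter m) (r : ℕ) :
    red (wordAtN (prependWord (u ++ Sum.inl i :: Sum.inr i :: w) η) (u.length + 1) (1 + r)) =
      (red (wordAtN (prependWord (u ++ w) η) u.length r)).map (· ++ [Sum.inr i]) := by
  set ξ := u ++ Sum.inl i :: Sum.inr i :: w with hξ
  set φ := prependWord ξ η with hφ
  set ψ := prependWord (u ++ w) η with hψ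
  have e1 : wordAtN φ (u.length + 1) 1 = [Sum.inr i] := by
    rw [wordAt_inside ξ η (u.length + 1) 1 (by simp [hξ])]
    have : ξ.drop (u.length + 1) = Sum.inr i :: w := by
      rw [hξ, ← List.drop_drop, List.drop_left]
      rfl
    rw [this]
    rfl
  have e4 : wordAtN φ (u.length + 2) r = wordAtN ψ u.length r := by
    simpa using D_shift u w i η 0 r
  have h2 : u.length + 1 + 1 = u.length + 2 := by omega
  rw [wordAtN_split φ (u.length + 1) 1 r, h2, e1, e4]
  exact red_cons_inr i _

lemma follower_del (u w : List (Letter m)) (i : Fin m) :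
    followerSet (u ++ Sum.inl i :: Sum.inr i :: w) = followerSet (u ++ w) := by
  ext η
  simp only [followerSet, Set.mem_setOf_eq, DyckSeqPlus, DyckAdmissible]
  constructor
  · intro H j n
    rcases le_or_gt u.length j with hj | hj
    · obtain ⟨t, rfl⟩ := Nat.exists_eq_add_of_le hj
      rw [← D_shift u w i η t n]
      exact H (u.length + 2 + t) n
    · apply adm_mono (show n ≤ (u.length - j) + n by omega)
      rw [← D_key u w i η j n (le_of_lt hj)]
      exact H j ((u.length - j) + (2 + n))
  · intro H j n
    rcases le_or_gt j u.length with hj | hj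
    · apply adm_mono (show n ≤ (u.length - j) + (2 + n) by omega)
      rw [D_key u w i η j n hj]
      exact H j ((u.length - j) + n)
    · rcases le_or_gt (u.length + 2) j with hj2 | hj2
      · obtain ⟨t, rfl⟩ := Nat.exists_eq_add_of_le hj2
        rw [D_shift u w i η t n]
        exact H (u.length + t) n
      · have hj1 : j = u.length + 1 := by omega
        subst hj1
        apply adm_mono (show n ≤ 1 + n by omega)
        rw [D_mid u w i η n]
        simp only [ne_eq, Option.map_eq_none_iff]
        exact H u.length n

lemma tricho (ξ : List (Letter m)) :
    (∃ ls : List (Fin m), ξ = ls.map Sum.inl) ∨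
    (∃ (j : Fin m) (ξ' : List (Letter m)), ξ = Sum.inr j :: ξ') ∨
    (∃ (u : List (Letter m)) (i k : Fin m) (w : List (Letter m)),
       ξ = u ++ Sum.inl i :: Sum.inr k :: w) := by
  induction ξ with
  | nil => exact Or.inl ⟨[], rfl⟩
  | cons x t ih =>
    cases x with
    | inr j => exact Or.inr (Or.inl ⟨j, t, rfl⟩)
    | inl i =>
      rcases ih with ⟨ls, rfl⟩ | ⟨j, ξ', rfl⟩ | ⟨u, a, b, w, rfl⟩
      · exact Or.inl ⟨i :: ls, rfl⟩
      · exact Or.inr (Or.inr ⟨[], i, j, ξ', rfl⟩)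
      · exact Or.inr (Or.inr ⟨Sum.inl i :: u, a, b, w, rfl⟩)

lemma adm_cons_inr (j : Fin m) (y : List (Letter m)) (h : red (Sum.inr j :: y) ≠ none) :
    red y ≠ none := by
  rw [red_cons_inr] at h
  intro hy
  apply h
  rw [hy]
  rfl

lemma adm_pattern (u w : List (Letter m)) (i k : Fin m)
    (h : red (u ++ Sum.inl i :: Sum.inr k :: w) ≠ none) :
    i = k ∧ red (u ++ w) ≠ none := by
  have hu : red u ≠ none := red_prefix u _ h
  obtain ⟨s, hs⟩ := Option.ne_none_iff_exists'.mp hu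
  by_cases hik : i = k
  · subst hik
    refine ⟨rfl, ?_⟩
    rwa [← red_cancel u w i]
  · exfalso
    apply h
    rw [red_append, hs, List.foldl_cons, List.foldl_cons]
    have hz : dyckStep m (dyckStep m (some s) (Sum.inl i)) (Sum.inr k) = none := by
      simp [dyckStep, hik]
    rw [hz, foldl_none]

lemma stmt1 : ∀ (N : ℕ) (ξ : List (Letter m)), ξ.length ≤ N → red ξ ≠ none →
    ∃ η : List (Fin m), followerSet ξ = followerSet (η.map Sum.inl) := by
  intro N
  induction N with
  | zero =>
    intro ξ hl _
    have hnil : ξ = [] := List.eq_nil_of_length_eq_zero (by omega)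
    subst hnil
    exact ⟨[], rfl⟩
  | succ N ih =>
    intro ξ hl hadm
    rcases tricho ξ with ⟨ls, rfl⟩ | ⟨j, ξ', rfl⟩ | ⟨u, i, k, w, rfl⟩
    · exact ⟨ls, rfl⟩
    · have h' : red ξ' ≠ none := adm_cons_inr j ξ' hadm
      obtain ⟨η, hη⟩ := ih ξ' (by simp at hl; omega) h'
      exact ⟨η, (follower_cons_inr j ξ').trans hη⟩
    · obtain ⟨hik, h'⟩ := adm_pattern u w i k hadm
      subst hik
      obtain ⟨η, hη⟩ := ih (u ++ w) (by simp at hl ⊢; omega) h'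
      exact ⟨η, (follower_del u w i).trans hη⟩

end DyckAux

/-- Every follower set of the one-sided Dyck shift equals the
follower set of some word in the left brackets; moreover `Θ^{ξ αᵢ βᵢ} = Θ^ξ`
for any word `ξ` in left brackets, and `Θ^{βᵢ} = Θ^∅`. -/
theorem dyck_follower_sets {m : ℕ} (hm : 2 ≤ m) :
    (∀ ξ : List (Letter m), DyckAdmissible ξ →
      ∃ η : List (Fin m), followerSet ξ = followerSet (η.map Sum.inl)) ∧
    (∀ (ξ : List (Fin m)) (i : Fin m),
      followerSet ((ξ.map Sum.inl : List (Letter m)) ++ [Sum.inl i, Sum.inr i])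
        = followerSet (ξ.map Sum.inl)) ∧
    (∀ i : Fin m, followerSet ([Sum.inr i] : List (Letter m)) = followerSet []) := by
  refine ⟨?_, ?_, ?_⟩
  · intro ξ hξ
    exact stmt1 ξ.length ξ le_rfl hξ
  · intro ξ i
    simpa using follower_del (ξ.map Sum.inl) [] i
  · intro i
    exact follower_cons_inr i []
end

section
/- The two-sided heterochaos shift is the natural extension of the one-sided heterochaos shift: Σ_{HC} = {ω ∈ {1,...,2m}^ℤ : (ω_n)_{n ≥ −k} ∈ Σ_{HC}⁺ for all k ≥ 1}. -/
/-- The one-dimensional factor map `F_a` on `[0,1]`: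
`x ↦ (x-(i-1)a)/a` on `[(i-1)a, ia)` and `x ↦ (x-ma)/(1-ma)` on `[ma,1]`. -/
noncomputable def bakerF (m : ℕ) (a : ℝ) (x : ℝ) : ℝ :=
  if x < m * a then Int.fract (x / a) else (x - m * a) / (1 - m * a)

/-- The index `i - m - 1 ∈ {0,…,m-1}` of the horizontal strip containing `y`. -/
noncomputable def stripIndex (m : ℕ) (y : ℝ) : ℤ := min ⌊(m : ℝ) * y⌋ ((m : ℤ) - 1)

/-- The two-dimensional generalized heterochaos baker map `f_a` on `[0,1]²`. -/
noncomputable def baker2 (m : ℕ) (a : ℝ) (p : ℝ × ℝ) : ℝ × ℝ :=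
  if p.1 < m * a then
    (bakerF m a p.1, p.2 / m + (⌊p.1 / a⌋ : ℝ) / m)
  else
    (bakerF m a p.1, m * p.2 - (stripIndex m p.2 : ℝ))

/-- The three-dimensional generalized heterochaos baker map `f_{a,b}` on `[0,1]³`. -/
noncomputable def baker3 (m : ℕ) (a b : ℝ) (p : ℝ × ℝ × ℝ) : ℝ × ℝ × ℝ :=
  if p.1 < m * a then
    ((baker2 m a (p.1, p.2.1)).1, (baker2 m a (p.1, p.2.1)).2, (1 - m * b) * p.2.2)
  else
    ((baker2 m a (p.1, p.2.1)).1, (baker2 m a (p.1, p.2.1)).2,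
      b * p.2.2 + 1 - m * b + b * (stripIndex m p.2.1 : ℝ))

/-- The domains `Ω_i⁺ ⊂ [0,1]²`, indexed by the Dyck alphabet:
`Sum.inl i` (a left bracket) labels the vertical strip `[ia,(i+1)a) × [0,1]`,
`Sum.inr i` (a right bracket) labels the horizontal strip of `[ma,1] × [0,1]`. -/
noncomputable def Omega2 (m : ℕ) (a : ℝ) : Letter m → Set (ℝ × ℝ)
  | Sum.inl i => Set.Ico ((i : ℝ) * a) (((i : ℝ) + 1) * a) ×ˢ Set.Icc 0 1
  | Sum.inr i =>
      Set.Icc ((m : ℝ) * a) 1 ×ˢ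
        (if (i : ℕ) = m - 1 then Set.Icc ((i : ℝ) / m) 1
         else Set.Ico ((i : ℝ) / m) (((i : ℝ) + 1) / m))

/-- The domains `Ω_i = Ω_i⁺ × [0,1] ⊂ [0,1]³`. -/
noncomputable def Omega3 (m : ℕ) (a : ℝ) (γ : Letter m) : Set (ℝ × ℝ × ℝ) :=
  {p | (p.1, p.2.1) ∈ Omega2 m a γ ∧ p.2.2 ∈ Set.Icc (0 : ℝ) 1}

/-- `Codes2 m a p ω` says that the forward `f_a`-orbit of `p ∈ [0,1]²` visits
the interiors of the domains `Ω⁺` in the order prescribed by `ω`; i.e. `p ∈ X_a`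
and `ω` is its coding. -/
def Codes2 (m : ℕ) (a : ℝ) (p : ℝ × ℝ) (ω : ℕ → Letter m) : Prop :=
  ∀ n : ℕ, (baker2 m a)^[n] p ∈ interior (Omega2 m a (ω n))

/-- `Codes3 m a b p ω` says that `p` has a full (two-sided) `f_{a,b}`-orbit
passing through the interiors of the domains `Ω` in the order prescribed by
`ω`; i.e. `p ∈ X_{a,b}` and `ω` is its coding `π̄(p)` (in the Dyck alphabet). -/
def Codes3 (m : ℕ) (a b : ℝ) (p : ℝ × ℝ × ℝ) (ω : ℤ → Letter m) : Prop :=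
  ∃ o : ℤ → ℝ × ℝ × ℝ, o 0 = p ∧ (∀ n : ℤ, o (n + 1) = baker3 m a b (o n)) ∧
    ∀ n : ℤ, o n ∈ interior (Omega3 m a (ω n))

/-- The set `X = X_{a,b}` of points whose full orbit stays in the interiors. -/
def Xset (m : ℕ) (a b : ℝ) : Set (ℝ × ℝ × ℝ) := {p | ∃ ω, Codes3 m a b p ω}

/-- The image `π̄(X)` of the coding map, inside the Dyck-alphabet full shift. -/
def piImage (m : ℕ) (a b : ℝ) : Set (ℤ → Letter m) := {ω | ∃ p, Codes3 m a b p ω}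

/-- The one-sided heterochaos shift `Σ_{HC}⁺ = cl(π_a(X_a))`. -/
noncomputable def SigmaHCplus (m : ℕ) (a : ℝ) : Set (ℕ → Letter m) :=
  closure {ω | ∃ p, Codes2 m a p ω}

/-- The two-sided heterochaos shift `Σ_{HC} = cl(π_{a,b}(X_{a,b}))`. -/
noncomputable def SigmaHC (m : ℕ) (a b : ℝ) : Set (ℤ → Letter m) :=
  closure (piImage m a b)
section Aux

lemma proj_baker3 (m : ℕ) (a b : ℝ) (p : ℝ × ℝ × ℝ) :
    ((baker3 m a b p).1, (baker3 m a b p).2.1) = baker2 m a (p.1, p.2.1) := by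
  by_cases h : p.1 < m * a <;> simp [baker3, baker2, h]

lemma interior_Omega2_inl (m : ℕ) (a : ℝ) (i : Fin m) :
    interior (Omega2 m a (Sum.inl i)) =
      Set.Ioo ((i:ℝ)*a) (((i:ℝ)+1)*a) ×ˢ Set.Ioo 0 1 := by
  simp only [Omega2, interior_prod_eq, interior_Ico, interior_Icc]

lemma interior_Omega2_inr (m : ℕ) (a : ℝ) (i : Fin m) :
    interior (Omega2 m a (Sum.inr i)) =
      Set.Ioo ((m:ℝ)*a) 1 ×ˢ
        (if (i:ℕ) = m - 1 then Set.Ioo ((i:ℝ)/m) 1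
         else Set.Ioo ((i:ℝ)/m) (((i:ℝ)+1)/m)) := by
  simp only [Omega2, interior_prod_eq, interior_Icc]
  split_ifs <;> simp [interior_Icc, interior_Ico]

lemma interior_Omega3_eq (m : ℕ) (a : ℝ) (γ : Letter m) :
    interior (Omega3 m a γ) =
      {p : ℝ × ℝ × ℝ | (p.1, p.2.1) ∈ interior (Omega2 m a γ) ∧
        p.2.2 ∈ Set.Ioo (0:ℝ) 1} := by
  have h : Omega3 m a γ =
      (Homeomorph.prodAssoc ℝ ℝ ℝ).symm ⁻¹' (Omega2 m a γ ×ˢ Set.Icc (0:ℝ) 1) := rfl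
  rw [h, ← Homeomorph.preimage_interior, interior_prod_eq, interior_Icc]
  rfl

end Aux
section Aux2
variable {m : ℕ} {a b : ℝ}

lemma ma_lt_one (hm : 2 ≤ m) (ha1 : a < 1 / m) : (m:ℝ) * a < 1 := by
  have hm' : (0:ℝ) < m := by positivity
  rw [lt_div_iff₀ hm'] at ha1; nlinarith

lemma interior_Omega2_subset (hm : 2 ≤ m) (ha0 : 0 < a) (ha1 : a < 1 / m)
    (γ : Letter m) :
    interior (Omega2 m a γ) ⊆ Set.Ioo 0 1 ×ˢ Set.Ioo 0 1 := by
  have hm' : (0:ℝ) < m := by positivity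
  have hma : (m:ℝ) * a < 1 := ma_lt_one hm ha1
  cases γ with
  | inl i =>
      rw [interior_Omega2_inl]
      rintro ⟨x, y⟩ ⟨⟨hx1, hx2⟩, hy⟩
      have hi : ((i:ℝ) + 1) ≤ m := by exact_mod_cast i.isLt
      have h0 : (0:ℝ) ≤ (i:ℝ) := by positivity
      refine ⟨⟨by nlinarith, by nlinarith⟩, hy⟩
  | inr i =>
      rw [interior_Omega2_inr]
      rintro ⟨x, y⟩ ⟨⟨hx1, hx2⟩, hy⟩
      have hi : ((i:ℝ) + 1) ≤ m := by exact_mod_cast i.isLt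
      have h0 : (0:ℝ) ≤ (i:ℝ) := by positivity
      refine ⟨⟨by nlinarith, hx2⟩, ?_⟩
      split_ifs at hy with h
      · exact ⟨lt_of_le_of_lt (by positivity) hy.1, hy.2⟩
      · refine ⟨lt_of_le_of_lt (by positivity) hy.1, lt_of_lt_of_le hy.2 ?_⟩
        rw [div_le_one hm']; linarith

lemma stripIndex_mem (hm : 2 ≤ m) {y : ℝ} (hy : y ∈ Set.Ioo (0:ℝ) 1) :
    (0:ℝ) ≤ (stripIndex m y : ℝ) ∧ (stripIndex m y : ℝ) ≤ (m:ℝ) - 1 := by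
  have hm' : (0:ℝ) < m := by positivity
  have h1 : (0:ℤ) ≤ stripIndex m y := by
    refine le_min (Int.floor_nonneg.2 (by nlinarith [hy.1])) ?_
    have : (2:ℤ) ≤ m := by exact_mod_cast hm
    omega
  have h2 : stripIndex m y ≤ (m:ℤ) - 1 := min_le_right _ _
  constructor
  · exact_mod_cast h1
  · have : (stripIndex m y : ℝ) ≤ ((m:ℤ) - 1 : ℤ) := by exact_mod_cast h2
    push_cast at this; linarith

lemma baker3_z_mem (hm : 2 ≤ m) (hb0 : 0 < b) (hb1 : b < 1 / m)
    (p : ℝ × ℝ × ℝ) (hy : p.2.1 ∈ Set.Ioo (0:ℝ) 1) (hz : p.2.2 ∈ Set.Ioo (0:ℝ) 1) :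
    (baker3 m a b p).2.2 ∈ Set.Ioo (0:ℝ) 1 := by
  have hmb : (m:ℝ) * b < 1 := ma_lt_one hm hb1
  unfold baker3
  split
  · rw [Set.mem_Ioo]; dsimp only
    exact ⟨by nlinarith [hz.1, hz.2], by nlinarith [hz.1, hz.2]⟩
  · obtain ⟨hj0, hj1⟩ := stripIndex_mem hm hy
    rw [Set.mem_Ioo]; dsimp only
    exact ⟨by nlinarith [hz.1, hz.2], by nlinarith [hz.1, hz.2]⟩

end Aux2
section Aux3
variable {m : ℕ} {a b : ℝ}

/-- The inverse branch through `Ω_{β₁}` with the `z`-coordinate pinned to the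
fixed point `z* = (1-mb)/(1-b)`. -/
noncomputable def back (m : ℕ) (a b : ℝ) (q : ℝ × ℝ × ℝ) : ℝ × ℝ × ℝ :=
  ((m:ℝ) * a + q.1 * (1 - (m:ℝ) * a), q.2.1 / m, (1 - (m:ℝ) * b) / (1 - b))

lemma zstar_mem (hm : 2 ≤ m) (hb0 : 0 < b) (hb1 : b < 1 / m) :
    (1 - (m:ℝ) * b) / (1 - b) ∈ Set.Ioo (0:ℝ) 1 := by
  have hmb : (m:ℝ) * b < 1 := ma_lt_one hm hb1
  have hmR : (2:ℝ) ≤ m := by exact_mod_cast hm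
  have hb : b < 1 := by nlinarith
  constructor
  · exact div_pos (by linarith) (by linarith)
  · rw [div_lt_one (by linarith)]; nlinarith

lemma back_coords (hm : 2 ≤ m) (ha0 : 0 < a) (ha1 : a < 1 / m)
    (hb0 : 0 < b) (hb1 : b < 1 / m) (q : ℝ × ℝ × ℝ)
    (hx : q.1 ∈ Set.Ioo (0:ℝ) 1) (hy : q.2.1 ∈ Set.Ioo (0:ℝ) 1) :
    (back m a b q).1 ∈ Set.Ioo ((m:ℝ)*a) 1 ∧
    (back m a b q).2.1 ∈ Set.Ioo (0:ℝ) (1/m) ∧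
    (back m a b q).2.2 = (1 - (m:ℝ) * b) / (1 - b) := by
  have hma : (m:ℝ) * a < 1 := ma_lt_one hm ha1
  have hm' : (0:ℝ) < m := by positivity
  unfold back
  refine ⟨⟨by dsimp only; nlinarith [hx.1, hx.2], by dsimp only; nlinarith [hx.1, hx.2]⟩,
    ⟨div_pos hy.1 hm', by dsimp only; rw [div_lt_div_iff₀ hm' hm']; nlinarith [hy.2]⟩, rfl⟩

lemma stripIndex_back (hm : 2 ≤ m) {y : ℝ} (hy : y ∈ Set.Ioo (0:ℝ) (1/m)) :
    stripIndex m y = 0 := by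
  have hm' : (0:ℝ) < m := by positivity
  have h1 : ⌊(m:ℝ) * y⌋ = 0 := by
    rw [Int.floor_eq_zero_iff]
    constructor
    · nlinarith [hy.1]
    · have : (m:ℝ) * y < m * (1/m) := by nlinarith [hy.2]
      rw [mul_one_div, div_self hm'.ne'] at this
      simpa using this
  unfold stripIndex
  rw [h1]
  have : (2:ℤ) ≤ m := by exact_mod_cast hm
  omega

lemma baker3_back (hm : 2 ≤ m) (ha0 : 0 < a) (ha1 : a < 1 / m)
    (hb0 : 0 < b) (hb1 : b < 1 / m) (q : ℝ × ℝ × ℝ)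
    (hx : q.1 ∈ Set.Ioo (0:ℝ) 1) (hy : q.2.1 ∈ Set.Ioo (0:ℝ) 1)
    (hz : q.2.2 = (1 - (m:ℝ) * b) / (1 - b)) :
    baker3 m a b (back m a b q) = q := by
  have hma : (m:ℝ) * a < 1 := ma_lt_one hm ha1
  have hmb : (m:ℝ) * b < 1 := ma_lt_one hm hb1
  have hm' : (0:ℝ) < m := by positivity
  have hmR : (2:ℝ) ≤ m := by exact_mod_cast hm
  have hb : b < 1 := by nlinarith
  obtain ⟨hx', hy', -⟩ := back_coords hm ha0 ha1 hb0 hb1 q hx hy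
  have hnot : ¬ (back m a b q).1 < (m:ℝ) * a := not_lt.2 hx'.1.le
  have hstrip : stripIndex m (back m a b q).2.1 = 0 := stripIndex_back hm hy'
  unfold baker3 baker2 bakerF
  rw [if_neg hnot]
  simp only [if_neg hnot, hstrip]
  have h1a : (1:ℝ) - m * a ≠ 0 := by linarith
  have h1b : (1:ℝ) - b ≠ 0 := by linarith
  have e1 : ((back m a b q).1 - m * a) / (1 - m * a) = q.1 := by
    unfold back; dsimp only; field_simp; ring
  have e2 : (m:ℝ) * (back m a b q).2.1 - ((0:ℤ):ℝ) = q.2.1 := by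
    unfold back; dsimp only; push_cast; field_simp; ring
  have e3 : b * (back m a b q).2.2 + 1 - m * b + b * ((0:ℤ):ℝ) = q.2.2 := by
    unfold back; dsimp only; rw [hz]; push_cast; field_simp; ring
  rw [e1, e2, e3]

end Aux3
section Aux4
variable {m : ℕ} {a b : ℝ}

lemma back_mem_interior (hm : 2 ≤ m) (ha0 : 0 < a) (ha1 : a < 1 / m)
    (hb0 : 0 < b) (hb1 : b < 1 / m) (q : ℝ × ℝ × ℝ)
    (hx : q.1 ∈ Set.Ioo (0:ℝ) 1) (hy : q.2.1 ∈ Set.Ioo (0:ℝ) 1) :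
    back m a b q ∈ interior (Omega3 m a (Sum.inr (⟨0, by omega⟩ : Fin m))) := by
  obtain ⟨hx', hy', hz'⟩ := back_coords hm ha0 ha1 hb0 hb1 q hx hy
  rw [interior_Omega3_eq]
  refine ⟨?_, hz' ▸ zstar_mem hm hb0 hb1⟩
  rw [interior_Omega2_inr]
  have h0 : ¬ ((⟨0, by omega⟩ : Fin m) : ℕ) = m - 1 := by simp; omega
  rw [if_neg h0]
  refine ⟨hx', ?_⟩
  simpa using hy'
end Aux4
section Aux5
variable {m : ℕ} {a b : ℝ}

/-- The two-sided orbit built from a one-sided coded point `p ∈ X_a`: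
forward orbit of `(p, z*)` from time `-N` on, pulled back through `Ω_{β₁}`
before time `-N`. -/
noncomputable def orb (m : ℕ) (a b : ℝ) (p : ℝ × ℝ) (N : ℕ) (n : ℤ) : ℝ × ℝ × ℝ :=
  if 0 ≤ n + N then (baker3 m a b)^[(n + N).toNat] (p.1, p.2, (1 - (m:ℝ)*b)/(1-b))
  else (back m a b)^[(-(n + N)).toNat] (p.1, p.2, (1 - (m:ℝ)*b)/(1-b))

lemma build_orbit (hm : 2 ≤ m) (ha0 : 0 < a) (ha1 : a < 1 / m)
    (hb0 : 0 < b) (hb1 : b < 1 / m)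
    (p : ℝ × ℝ) (σ : ℕ → Letter m) (hp : Codes2 m a p σ) (N : ℕ) :
    (fun n : ℤ => if 0 ≤ n + N then σ (n + N).toNat
      else Sum.inr (⟨0, by omega⟩ : Fin m)) ∈ piImage m a b := by
  have hma : (m:ℝ) * a < 1 := ma_lt_one hm ha1
  have hm' : (0:ℝ) < m := by positivity
  set zs : ℝ := (1 - (m:ℝ)*b)/(1-b) with hzs
  set q0 : ℝ × ℝ × ℝ := (p.1, p.2, zs) with hq0
  set fw : ℕ → ℝ × ℝ × ℝ := fun t => (baker3 m a b)^[t] q0 with hfw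
  set bw : ℕ → ℝ × ℝ × ℝ := fun t => (back m a b)^[t] q0 with hbw
  have hsub : ∀ t, (baker2 m a)^[t] p ∈ Set.Ioo (0:ℝ) 1 ×ˢ Set.Ioo (0:ℝ) 1 :=
    fun t => interior_Omega2_subset hm ha0 ha1 _ (hp t)
  have F1 : ∀ t : ℕ, ((fw t).1, (fw t).2.1) = (baker2 m a)^[t] p ∧
      (fw t).2.2 ∈ Set.Ioo (0:ℝ) 1 := by
    intro t
    induction t with
    | zero => exact ⟨rfl, zstar_mem hm hb0 hb1⟩
    | succ t ih =>
        have h1 : fw (t+1) = baker3 m a b (fw t) := Function.iterate_succ_apply' _ _ _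
        constructor
        · rw [h1, proj_baker3, ih.1]
          exact (Function.iterate_succ_apply' _ _ _).symm
        · rw [h1]
          refine baker3_z_mem hm hb0 hb1 _ ?_ ih.2
          have h2 : (fw t).2.1 = ((baker2 m a)^[t] p).2 := congrArg Prod.snd ih.1
          rw [h2]
          exact (hsub t).2
  have hq0x : q0.1 ∈ Set.Ioo (0:ℝ) 1 ∧ q0.2.1 ∈ Set.Ioo (0:ℝ) 1 := by
    have h := hsub 0
    exact ⟨h.1, h.2⟩
  have F2 : ∀ t : ℕ, (bw t).1 ∈ Set.Ioo (0:ℝ) 1 ∧ (bw t).2.1 ∈ Set.Ioo (0:ℝ) 1 ∧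
      (bw t).2.2 = zs := by
    intro t
    induction t with
    | zero => exact ⟨hq0x.1, hq0x.2, rfl⟩
    | succ t ih =>
        have h1 : bw (t+1) = back m a b (bw t) := Function.iterate_succ_apply' _ _ _
        obtain ⟨hx', hy', hz'⟩ := back_coords hm ha0 ha1 hb0 hb1 (bw t) ih.1 ih.2.1
        rw [h1]
        refine ⟨⟨lt_trans (by positivity) hx'.1, hx'.2⟩, ⟨hy'.1, lt_trans hy'.2 ?_⟩, hz'⟩
        rw [div_lt_one hm']
        exact_mod_cast lt_of_lt_of_le one_lt_two (by exact_mod_cast hm)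
  have horb : ∀ n : ℤ, orb m a b p N n = if 0 ≤ n + N then fw (n + N).toNat
      else bw (-(n + N)).toNat := fun n => rfl
  refine ⟨orb m a b p N 0, orb m a b p N, rfl, ?_, ?_⟩
  · intro n
    by_cases h : 0 ≤ n + N
    · have h' : 0 ≤ n + 1 + N := by omega
      have e : (n + 1 + N).toNat = (n + N).toNat + 1 := by omega
      rw [horb, horb, if_pos h, if_pos h', e]
      exact Function.iterate_succ_apply' _ _ _
    · have h2 : ¬ 0 ≤ n + N := h
      have e : (-(n + N)).toNat = (-(n + 1 + N)).toNat + 1 := by omega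
      rw [horb, horb, if_neg h2, e]
      by_cases h3 : 0 ≤ n + 1 + N
      · -- n + N = -1
        have e0 : (n + 1 + N).toNat = 0 := by omega
        have e1 : (-(n + 1 + N)).toNat = 0 := by omega
        rw [if_pos h3, e0, e1]
        have h4 : bw (0+1) = back m a b (bw 0) := Function.iterate_succ_apply' _ _ _
        rw [h4]
        exact (baker3_back hm ha0 ha1 hb0 hb1 (bw 0) (F2 0).1 (F2 0).2.1 (F2 0).2.2).symm
      · rw [if_neg h3]
        set t : ℕ := (-(n + 1 + N)).toNat with ht
        have h4 : bw (t+1) = back m a b (bw t) := Function.iterate_succ_apply' _ _ _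
        rw [h4]
        exact (baker3_back hm ha0 ha1 hb0 hb1 (bw t) (F2 t).1 (F2 t).2.1 (F2 t).2.2).symm
  · intro n
    by_cases h : 0 ≤ n + N
    · rw [horb]
      simp only [if_pos h]
      rw [interior_Omega3_eq]
      refine ⟨?_, (F1 _).2⟩
      rw [(F1 _).1]
      exact hp _
    · rw [horb]
      simp only [if_neg h]
      have e : (-(n + N)).toNat = (-(n + 1 + N)).toNat + 1 := by omega
      rw [e]
      have h4 : bw ((-(n + 1 + N)).toNat + 1) = back m a b (bw (-(n + 1 + N)).toNat) :=
        Function.iterate_succ_apply' _ _ _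
      rw [h4]
      exact back_mem_interior hm ha0 ha1 hb0 hb1 _ (F2 _).1 (F2 _).2.1

end Aux5

/-- The two-sided heterochaos shift is the natural extension of
the one-sided one: `Σ_{HC} = {ω ∈ D^ℤ : (ω_n)_{n ≥ -k} ∈ Σ_{HC}⁺ for all k ≥ 1}`. -/
theorem sigmaHC_natural_extension (m : ℕ) (hm : 2 ≤ m) (a b : ℝ)
    (ha0 : 0 < a) (ha1 : a < 1 / m) (hb0 : 0 < b) (hb1 : b < 1 / m) :
    SigmaHC m a b =
      {ω : ℤ → Letter m | ∀ k : ℕ, 1 ≤ k →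
        (fun n : ℕ => ω ((n : ℤ) - (k : ℤ))) ∈ SigmaHCplus m a} := by
  apply Set.Subset.antisymm
  · apply closure_minimal
    · rintro ω ⟨q, o, h0, hrec, hmem⟩ k hk
      apply subset_closure
      refine ⟨((o (-(k:ℤ))).1, (o (-(k:ℤ))).2.1), ?_⟩
      intro n
      have key : ∀ t : ℕ, (baker2 m a)^[t] ((o (-(k:ℤ))).1, (o (-(k:ℤ))).2.1)
          = ((o ((t:ℤ) - k)).1, (o ((t:ℤ) - k)).2.1) := by
        intro t
        induction t with
        | zero => norm_num
        | succ t ih =>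
            rw [Function.iterate_succ_apply', ih, ← proj_baker3, ← hrec]
            have e : (t:ℤ) - k + 1 = ((t+1:ℕ):ℤ) - k := by push_cast; ring
            rw [e]
      rw [key n]
      have h2 := hmem ((n:ℤ) - k)
      rw [interior_Omega3_eq] at h2
      exact h2.1
    · have hset : {ω : ℤ → Letter m | ∀ k : ℕ, 1 ≤ k →
          (fun n : ℕ => ω ((n:ℤ) - (k:ℤ))) ∈ SigmaHCplus m a}
          = ⋂ (k : ℕ) (_ : 1 ≤ k),
              (fun (ω : ℤ → Letter m) (n : ℕ) => ω ((n:ℤ) - (k:ℤ))) ⁻¹' SigmaHCplus m a := by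
        ext ω; simp [Set.mem_iInter]
      rw [hset]
      refine isClosed_iInter fun k => isClosed_iInter fun hk => ?_
      exact IsClosed.preimage (continuous_pi fun n => continuous_apply _) isClosed_closure
  · intro ω hω
    have key : ∀ N : ℕ, ∃ ξ ∈ piImage m a b, ∀ n : ℤ, n.natAbs ≤ N → ξ n = ω n := by
      intro N
      have h1 := hω (N+1) (by omega)
      set tail : ℕ → Letter m := fun n => ω ((n:ℤ) - ((N+1:ℕ):ℤ)) with htail
      have hex : ∃ σ ∈ {σ | ∃ p, Codes2 m a p σ},
          ∀ j ∈ Finset.range (2*N+3), σ j = tail j := by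
        have hU : IsOpen {τ : ℕ → Letter m | ∀ j ∈ Finset.range (2*N+3), τ j = tail j} := by
          have hUe : {τ : ℕ → Letter m | ∀ j ∈ Finset.range (2*N+3), τ j = tail j}
              = ⋂ j ∈ Finset.range (2*N+3), (fun τ : ℕ → Letter m => τ j) ⁻¹' {tail j} := by
            ext τ; simp
          rw [hUe]
          exact isOpen_biInter_finset fun j _ =>
            (continuous_apply j).isOpen_preimage _ (isOpen_discrete _)
        obtain ⟨σ, hσ1, hσ2⟩ := mem_closure_iff.1 h1 _ hU (fun j _ => rfl)
        exact ⟨σ, hσ2, hσ1⟩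
      obtain ⟨σ, ⟨p, hp⟩, hσ⟩ := hex
      refine ⟨_, build_orbit hm ha0 ha1 hb0 hb1 p σ hp (N+1), ?_⟩
      intro n hn
      have h2 : 0 ≤ n + ((N+1:ℕ):ℤ) := by omega
      simp only [if_pos h2]
      have h3 : (n + ((N+1:ℕ):ℤ)).toNat ∈ Finset.range (2*N+3) := by
        simp only [Finset.mem_range]; omega
      rw [hσ _ h3]
      simp only [htail]
      congr 1
      omega
    choose ξ hξmem hξ using key
    refine mem_closure_of_tendsto (f := ξ) (b := Filter.atTop) ?_
      (Filter.Eventually.of_forall hξmem)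
    rw [tendsto_pi_nhds]
    intro n
    refine Filter.Tendsto.congr' ?_ tendsto_const_nhds
    filter_upwards [Filter.eventually_ge_atTop n.natAbs] with N hN
    exact (hξ N n hN).symm
end

section
/- The one-sided heterochaos shift Σ_{HC}⁺ is isomorphic to the one-sided Dyck shift Σ_D⁺ via the symbol bijection κ(i) = α_i and κ(i+m) = β_i for i ∈ {1,...,m}; that is, the map (ω_n) ↦ (κ(ω_n)) is a homeomorphism from Σ_{HC}⁺ onto Σ_D⁺ commuting with the shifts. -/
/-- The symbol bijection `κ : {1,…,2m} → D`, `κ(i) = αᵢ`, `κ(i+m) = βᵢ`. -/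
def kappa (m : ℕ) (i : Fin (2 * m)) : Letter m :=
  if h : (i : ℕ) < m then Sum.inl ⟨i, h⟩
  else Sum.inr ⟨(i : ℕ) - m, by have := i.2; omega⟩

/-- The one-sided heterochaos shift on the symbols `{1,…,2m}` (as `Fin (2m)`):
the closure of the set of codings of points of `X_a` with respect to the
partition `Ω₁⁺,…,Ω_{2m}⁺` of `[0,1]²`. -/
noncomputable def SigmaHCplusF (m : ℕ) (a : ℝ) : Set (ℕ → Fin (2 * m)) :=
  closure {ω | ∃ p : ℝ × ℝ, ∀ n : ℕ,
    (baker2 m a)^[n] p ∈ interior (Omega2 m a (kappa m (ω n)))}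


namespace HD
variable {m : ℕ}

def aIdx : List (Letter m) → List (Fin m)
  | Sum.inl i :: t => i :: aIdx t
  | _ => []

def bIdx (s : List (Letter m)) : List (Fin m) :=
  (s.filterMap Sum.getRight?).reverse

@[simp] lemma aIdx_nil : aIdx ([] : List (Letter m)) = [] := rfl
@[simp] lemma aIdx_inl (i : Fin m) (t) : aIdx (Sum.inl i :: t) = i :: aIdx t := rfl
@[simp] lemma aIdx_inr (j : Fin m) (t) : aIdx (Sum.inr j :: t) = [] := rfl
@[simp] lemma bIdx_nil : bIdx ([] : List (Letter m)) = [] := rfl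
@[simp] lemma bIdx_inl (i : Fin m) (t) : bIdx (Sum.inl i :: t) = bIdx t := by
  simp [bIdx, Sum.getRight?]; rfl
@[simp] lemma bIdx_inr (j : Fin m) (t) : bIdx (Sum.inr j :: t) = bIdx t ++ [j] := by
  simp [bIdx, Sum.getRight?]

def Dlist : List (Letter m) → List (Fin m) → Option (List (Fin m))
  | [], A => some A
  | Sum.inl i :: l, A =>
      match Dlist l A with
      | some (i' :: d) => if i' = i then some d else none
      | _ => none
  | Sum.inr j :: l, A => (Dlist l A).map (j :: ·)

@[simp] lemma Dlist_nil (A : List (Fin m)) : Dlist [] A = some A := rfl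

lemma Dlist_append (u v : List (Letter m)) (A : List (Fin m)) :
    Dlist (u ++ v) A = (Dlist v A).bind (fun d => Dlist u d) := by
  induction u with
  | nil => simp [Dlist]
  | cons c u ih =>
    cases c with
    | inl i =>
      show (match Dlist (u ++ v) A with
        | some (i' :: d) => if i' = i then some d else none
        | _ => none) = _
      rw [ih]
      cases h : Dlist v A with
      | none => simp
      | some d => simp [Dlist]
    | inr j =>
      show (Dlist (u ++ v) A).map (j :: ·) = _
      rw [ih]
      cases h : Dlist v A with
      | none => simp
      | some d => simp [Dlist]

lemma red_append_singleton (l : List (Letter m)) (c : Letter m) :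
    red (l ++ [c]) = dyckStep m (red l) c := by
  simp [red, List.foldl_append]

lemma dlist_of_red : ∀ (l : List (Letter m)) (s : List (Letter m)),
    red l = some s → ∀ B : List (Fin m),
    Dlist l (aIdx s ++ B) = some (bIdx s ++ B) := by
  intro l
  induction l using List.reverseRecOn with
  | nil =>
    intro s hs B
    simp [red] at hs
    subst hs
    simp
  | append_singleton l c ih =>
    intro s hs B
    rw [red_append_singleton] at hs
    cases hr : red l with
    | none => rw [hr] at hs; simp [dyckStep] at hs
    | some s'' =>
      rw [hr] at hs
      cases c with
      | inl i =>
        have hseq : Sum.inl i :: s'' = s := by simpa [dyckStep] using hs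
        subst hseq
        rw [Dlist_append]
        have h1 : Dlist [Sum.inl i] (aIdx (Sum.inl i :: s'') ++ B)
            = some (aIdx s'' ++ B) := by simp [Dlist]
        rw [h1, Option.bind_some, bIdx_inl]
        exact ih s'' hr B
      | inr j =>
        cases s'' with
        | nil =>
          have hseq : Sum.inr j :: ([] : List (Letter m)) = s := by
            simpa [dyckStep] using hs
          subst hseq
          rw [Dlist_append]
          have h1 : Dlist [Sum.inr j] (aIdx (Sum.inr j :: ([] : List (Letter m))) ++ B)
              = some (j :: B) := by simp [Dlist]
          rw [h1, Option.bind_some]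
          have := ih [] hr (j :: B)
          simpa using this
        | cons hd t =>
          cases hd with
          | inl i' =>
            by_cases hij : i' = j
            · subst hij
              have hts : t = s := by simpa [dyckStep] using hs
              subst hts
              rw [Dlist_append]
              have h1 : Dlist [Sum.inr i'] (aIdx t ++ B) = some (i' :: (aIdx t ++ B)) := by
                simp [Dlist]
              rw [h1, Option.bind_some]
              have := ih (Sum.inl i' :: t) hr B
              simpa using this
            · simp [dyckStep, hij] at hs
          | inr j' =>
            have hseq : Sum.inr j :: (Sum.inr j' :: t) = s := by
              simpa [dyckStep] using hs
            subst hseq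
            rw [Dlist_append]
            have h1 : Dlist [Sum.inr j] (aIdx (Sum.inr j :: Sum.inr j' :: t) ++ B)
                = some (j :: B) := by simp [Dlist]
            rw [h1, Option.bind_some]
            have := ih (Sum.inr j' :: t) hr (j :: B)
            simpa using this
end HD

namespace HD
open Set
variable {m : ℕ}

noncomputable def enc (d : List (Fin m)) (r : ℝ) : ℝ :=
  d.foldr (fun i y => ((i : ℝ) + y) / m) r

@[simp] lemma enc_nil (r : ℝ) : enc ([] : List (Fin m)) r = r := rfl
@[simp] lemma enc_cons (i : Fin m) (d : List (Fin m)) (r : ℝ) :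
    enc (i :: d) r = ((i : ℝ) + enc d r) / m := rfl

lemma enc_mem (hm : 0 < m) (d : List (Fin m)) {r : ℝ} (hr : r ∈ Ioo (0:ℝ) 1) :
    enc d r ∈ Ioo (0:ℝ) 1 := by
  induction d with
  | nil => exact hr
  | cons i d ih =>
    have hm' : (0:ℝ) < m := by exact_mod_cast hm
    have hi : (i : ℝ) ≤ (m : ℝ) - 1 := by
      have := i.2; have : (i:ℕ) + 1 ≤ m := this
      have : ((i:ℕ):ℝ) + 1 ≤ (m:ℝ) := by exact_mod_cast this
      linarith
    have h0 : (0:ℝ) ≤ (i : ℝ) := by positivity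
    rw [enc_cons]
    constructor
    · have hpos : (0:ℝ) < (i:ℝ) + enc d r := by linarith [ih.1]
      exact div_pos hpos hm'
    · rw [div_lt_one hm']
      linarith [ih.2]

lemma enc_cons_mem (hm : 0 < m) (i : Fin m) (d : List (Fin m)) {r : ℝ}
    (hr : r ∈ Ioo (0:ℝ) 1) :
    enc (i :: d) r ∈ Ioo ((i:ℝ)/m) (((i:ℝ)+1)/m) := by
  have hm' : (0:ℝ) < m := by exact_mod_cast hm
  have h := enc_mem hm d hr
  rw [enc_cons]
  constructor
  · apply div_lt_div_of_pos_right ?h hm'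
    case h => linarith [h.1]
  · apply div_lt_div_of_pos_right ?h2 hm'
    case h2 => linarith [h.2]

end HD


namespace HD
open Set
section Baker
variable {m : ℕ} {a : ℝ}

lemma mem_interior_inl_iff (i : Fin m) (p : ℝ × ℝ) :
    p ∈ interior (Omega2 m a (Sum.inl i)) ↔
      p.1 ∈ Ioo ((i:ℝ)*a) (((i:ℝ)+1)*a) ∧ p.2 ∈ Ioo (0:ℝ) 1 := by
  show p ∈ interior (Ico _ _ ×ˢ Icc _ _) ↔ _
  rw [interior_prod_eq, interior_Ico, interior_Icc]
  simp [Set.mem_prod]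

lemma mem_interior_inr_iff (hm : 0 < m) (i : Fin m) (p : ℝ × ℝ) :
    p ∈ interior (Omega2 m a (Sum.inr i)) ↔
      p.1 ∈ Ioo ((m:ℝ)*a) 1 ∧ p.2 ∈ Ioo ((i:ℝ)/m) (((i:ℝ)+1)/m) := by
  show p ∈ interior (Icc _ _ ×ˢ _) ↔ _
  rw [interior_prod_eq, interior_Icc]
  by_cases h : (i:ℕ) = m - 1
  · rw [if_pos h, interior_Icc]
    have h1 : ((i:ℝ)+1)/m = 1 := by
      have hn : (i:ℕ) + 1 = m := by omega
      have : ((i:ℝ)+1) = (m:ℝ) := by exact_mod_cast hn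
      rw [this]
      field_simp
    rw [h1]
    simp [Set.mem_prod]
  · rw [if_neg h, interior_Ico]
    simp [Set.mem_prod]

lemma floor_eq_of_mem {x : ℝ} {k : ℕ} (h : (k:ℝ) ≤ x) (h2 : x < (k:ℝ) + 1) :
    ⌊x⌋ = (k:ℕ) := by
  rw [Int.floor_eq_iff] <;> constructor
  · exact_mod_cast h
  · push_cast; exact h2

lemma baker2_step_inl (ha0 : 0 < a) (i : Fin m)
    {p : ℝ × ℝ} (hx : p.1 ∈ Ioo ((i:ℝ)*a) (((i:ℝ)+1)*a)) :
    baker2 m a p = (p.1 / a - i, (p.2 + i) / m) ∧ p.1 / a - i ∈ Ioo (0:ℝ) 1 := by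
  have hi1 : ((i:ℝ)+1) ≤ (m:ℝ) := by exact_mod_cast i.2
  have hlt : p.1 < m * a := lt_of_lt_of_le hx.2 (by nlinarith)
  have hd1 : (i:ℝ) < p.1 / a := (lt_div_iff₀ ha0).mpr (by linarith [hx.1])
  have hd2 : p.1 / a < (i:ℝ) + 1 := (div_lt_iff₀ ha0).mpr (by linarith [hx.2])
  have hfl : ⌊p.1 / a⌋ = ((i:ℕ):ℤ) := floor_eq_of_mem hd1.le hd2
  refine ⟨?_, by constructor <;> linarith⟩
  unfold baker2 bakerF
  rw [if_pos hlt, if_pos hlt]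
  have hfr : Int.fract (p.1 / a) = p.1 / a - (i:ℝ) := by
    show p.1 / a - _ = _
    rw [hfl]; push_cast; ring
  rw [hfr, hfl]
  have hm0 : (m:ℝ) ≠ 0 := by
    have := i.pos
    exact Nat.cast_ne_zero.mpr (by omega)
  rw [Prod.mk.injEq]
  constructor
  · push_cast; ring
  · push_cast; field_simp

lemma baker2_step_inr (hm : 0 < m) (ha0 : 0 < a) (ham : (m:ℝ)*a < 1) (j : Fin m)
    {p : ℝ × ℝ} (hx : p.1 ∈ Ioo ((m:ℝ)*a) 1) (hy : p.2 ∈ Ioo ((j:ℝ)/m) (((j:ℝ)+1)/m)) :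
    baker2 m a p = ((p.1 - m*a)/(1 - m*a), m * p.2 - j) ∧
      (p.1 - m*a)/(1 - m*a) ∈ Ioo (0:ℝ) 1 ∧ m * p.2 - j ∈ Ioo (0:ℝ) 1 := by
  have hm' : (0:ℝ) < m := by exact_mod_cast hm
  have hnlt : ¬ p.1 < m*a := not_lt.mpr hx.1.le
  have hd1 : (j:ℝ) < m * p.2 := by
    have := (div_lt_iff₀ hm').mp hy.1; linarith
  have hd2 : (m:ℝ) * p.2 < (j:ℝ) + 1 := by
    have := (lt_div_iff₀ hm').mp hy.2; linarith
  have hfl : ⌊(m:ℝ) * p.2⌋ = ((j:ℕ):ℤ) := floor_eq_of_mem hd1.le hd2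
  have hpos : (0:ℝ) < 1 - m*a := by linarith
  refine ⟨?_, ⟨div_pos (by linarith [hx.1]) hpos, (div_lt_one hpos).mpr (by linarith [hx.2])⟩,
    by constructor <;> linarith⟩
  unfold baker2 bakerF stripIndex
  rw [if_neg hnlt, if_neg hnlt, hfl]
  have hjm : ((j:ℕ):ℤ) ≤ (m:ℤ) - 1 := by have := j.2; omega
  rw [min_eq_left hjm]
  rw [Prod.mk.injEq]
  exact ⟨rfl, by push_cast; ring⟩

end Baker
end HD


namespace HD
open Set
section Forward
variable {m : ℕ} {a : ℝ}

lemma wordAtN_succ (ω : ℕ → Letter m) (i n : ℕ) :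
    wordAtN ω i (n+1) = wordAtN ω i n ++ [ω (i+n)] := by
  rw [wordAtN, List.ofFn_succ']
  simp [wordAtN, List.concat_eq_append]

lemma codes_dyck (hm : 0 < m) (ha0 : 0 < a) (ham : (m:ℝ)*a < 1)
    (p : ℝ × ℝ) (ω : ℕ → Letter m)
    (hc : ∀ n, (baker2 m a)^[n] p ∈ interior (Omega2 m a (ω n))) :
    DyckSeqPlus ω := by
  have hm' : (0:ℝ) < m := by exact_mod_cast hm
  have hy01 : ∀ n, ((baker2 m a)^[n] p).2 ∈ Ioo (0:ℝ) 1 := by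
    intro n
    cases hcn : ω n with
    | inl i =>
      have h := hc n; rw [hcn] at h
      exact ((mem_interior_inl_iff i _).mp h).2
    | inr j =>
      have h := hc n; rw [hcn] at h
      have h2 := ((mem_interior_inr_iff hm j _).mp h).2
      refine ⟨lt_of_le_of_lt (by positivity) h2.1, lt_of_lt_of_le h2.2 ?_⟩
      rw [div_le_one hm']
      exact_mod_cast j.2
  intro i n
  suffices H : ∃ s y', red (wordAtN ω i n) = some s ∧
      ((baker2 m a)^[i+n] p).2 = enc (aIdx s) y' ∧ y' ∈ Ioo (0:ℝ) 1 by
    obtain ⟨s, _, hs, _⟩ := H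
    simp [DyckAdmissible, hs]
  induction n with
  | zero =>
    refine ⟨[], ((baker2 m a)^[i] p).2, ?_, by simp, hy01 i⟩
    simp [wordAtN, red]
  | succ n ih =>
    obtain ⟨s, y', hred, henc, hy'⟩ := ih
    set q := (baker2 m a)^[i+n] p with hq
    have hmem := hc (i+n)
    have hit : (baker2 m a)^[i+(n+1)] p = baker2 m a q := by
      rw [show i+(n+1) = (i+n)+1 by ring, Function.iterate_succ_apply']
    rw [wordAtN_succ, red_append_singleton, hred]
    cases hcn : ω (i+n) with
    | inl j =>
      rw [hcn] at hmem
      have hmm := (mem_interior_inl_iff j q).mp hmem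
      have hstep := baker2_step_inl ha0 j hmm.1
      refine ⟨Sum.inl j :: s, y', rfl, ?_, hy'⟩
      rw [hit, hstep.1, aIdx_inl, enc_cons, ← henc]
      show (q.2 + (j:ℝ))/m = _
      ring
    | inr j =>
      rw [hcn] at hmem
      have hmm := (mem_interior_inr_iff hm j q).mp hmem
      have hstep := baker2_step_inr hm ha0 ham j hmm.1 hmm.2
      cases s with
      | nil =>
        refine ⟨[Sum.inr j], m*q.2 - j, rfl, ?_, hstep.2.2⟩
        rw [hit, hstep.1]
        simp
      | cons c t =>
        cases c with
        | inl i' =>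
          have hq2 : q.2 ∈ Ioo ((i':ℝ)/m) (((i':ℝ)+1)/m) := by
            rw [show q.2 = enc (i' :: aIdx t) y' from henc]
            exact enc_cons_mem hm i' (aIdx t) hy'
          have hij : i' = j := by
            have h1 : (i':ℝ)/m < ((j:ℝ)+1)/m := lt_trans hq2.1 hmm.2.2
            have h2 : (j:ℝ)/m < ((i':ℝ)+1)/m := lt_trans hmm.2.1 hq2.2
            have h1' : (i':ℝ) < (j:ℝ)+1 := by
              by_contra hcon
              push_neg at hcon
              have : ((j:ℝ)+1)/m ≤ (i':ℝ)/m := by gcongr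
              linarith
            have h2' : (j:ℝ) < (i':ℝ)+1 := by
              by_contra hcon
              push_neg at hcon
              have : ((i':ℝ)+1)/m ≤ (j:ℝ)/m := by gcongr
              linarith
            have hn1 : (i':ℕ) < (j:ℕ)+1 := by exact_mod_cast h1'
            have hn2 : (j:ℕ) < (i':ℕ)+1 := by exact_mod_cast h2'
            exact Fin.ext (by omega)
          subst hij
          refine ⟨t, y', by simp [dyckStep], ?_, hy'⟩
          rw [hit, hstep.1]
          show m * q.2 - (i':ℝ) = enc (aIdx t) y'
          rw [show q.2 = enc (i' :: aIdx t) y' from henc, enc_cons]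
          field_simp; ring
        | inr j' =>
          refine ⟨Sum.inr j :: Sum.inr j' :: t, m*q.2 - j, rfl, ?_, hstep.2.2⟩
          rw [hit, hstep.1]
          simp

end Forward
end HD


namespace HD
open Set
section Realize
variable {m : ℕ} {a : ℝ}

@[simp] lemma Dlist_cons_inl (i : Fin m) (l : List (Letter m)) (A : List (Fin m)) :
    Dlist (Sum.inl i :: l) A = (match Dlist l A with
      | some (i' :: d) => if i' = i then some d else none
      | _ => none) := rfl

@[simp] lemma Dlist_cons_inr (j : Fin m) (l : List (Letter m)) (A : List (Fin m)) :
    Dlist (Sum.inr j :: l) A = (Dlist l A).map (j :: ·) := rfl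

/-- inverse branches of the one-dimensional map -/
noncomputable def gbr (m : ℕ) (a : ℝ) : Letter m → ℝ → ℝ
  | Sum.inl i, t => a * (t + i)
  | Sum.inr _, t => m * a + (1 - m * a) * t

/-- backward step for the second coordinate -/
noncomputable def ystep (m : ℕ) : Letter m → ℝ → ℝ
  | Sum.inl i, t => m * t - i
  | Sum.inr j, t => (t + j) / m

noncomputable def uPt (a : ℝ) : ℝ := a^2/(1-a^2)
noncomputable def vPt (a : ℝ) : ℝ := a/(1-a^2)

noncomputable def xbk (m : ℕ) (a : ℝ) (ω' : ℕ → Letter m) (N : ℕ) : ℕ → ℝ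
  | 0 => if (N+1) % 2 = 0 then uPt a else vPt a
  | k+1 => gbr m a (ω' (N - k)) (xbk m a ω' N k)

noncomputable def ybk (m : ℕ) (ω' : ℕ → Letter m) (N : ℕ) (A : List (Fin m)) : ℕ → ℝ
  | 0 => enc A (1/2)
  | k+1 => ystep m (ω' (N - k)) (ybk m ω' N A k)

noncomputable def yfw (m N : ℕ) (y0 : ℝ) : ℕ → ℝ
  | 0 => y0
  | j+1 => (yfw m N y0 j + ((N+1+j) % 2 : ℕ)) / m

noncomputable def Xfull (m : ℕ) (a : ℝ) (ω' : ℕ → Letter m) (N n : ℕ) : ℝ :=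
  if n ≤ N+1 then xbk m a ω' N (N+1-n) else (if n % 2 = 0 then uPt a else vPt a)

noncomputable def Yfull (m : ℕ) (ω' : ℕ → Letter m) (N : ℕ) (A : List (Fin m)) (n : ℕ) : ℝ :=
  if n ≤ N+1 then ybk m ω' N A (N+1-n) else yfw m N (enc A (1/2)) (n - (N+1))

set_option maxHeartbeats 2000000 in
lemma realize (hm : 2 ≤ m) (ha0 : 0 < a) (ham : (m:ℝ)*a < 1)
    (ω : ℕ → Letter m) (hω : DyckSeqPlus ω) (N : ℕ) :
    ∃ ω'' : ℕ → Letter m,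
      (∃ p : ℝ × ℝ, ∀ n, (baker2 m a)^[n] p ∈ interior (Omega2 m a (ω'' n))) ∧
      ∀ n ≤ N, ω'' n = ω n := by
  have hm0 : 0 < m := by omega
  have hm' : (0:ℝ) < m := by exact_mod_cast hm0
  have hm2 : (2:ℝ) ≤ (m:ℝ) := by exact_mod_cast hm
  have ha2 : a < 1/2 := by nlinarith
  have ha1 : (0:ℝ) < 1 - a^2 := by nlinarith
  have hma : 0 < 1 - (m:ℝ)*a := by linarith
  have hu : uPt a ∈ Ioo (0:ℝ) a := by
    constructor
    · rw [uPt]; positivity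
    · rw [uPt, div_lt_iff₀ ha1]; nlinarith
  have hv : vPt a ∈ Ioo a (2*a) := by
    constructor
    · rw [vPt, lt_div_iff₀ ha1]; nlinarith [mul_pos (mul_pos ha0 ha0) ha0]
    · rw [vPt, div_lt_iff₀ ha1]; nlinarith [mul_pos (mul_pos ha0 ha0) ha0]
  have hu01 : uPt a ∈ Ioo (0:ℝ) 1 := by
    refine ⟨hu.1, ?_⟩
    have := hu.2
    linarith
  have hv01 : vPt a ∈ Ioo (0:ℝ) 1 := by
    refine ⟨lt_trans ha0 hv.1, ?_⟩
    have := hv.2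
    linarith
  have huv : uPt a = a * vPt a := by rw [uPt, vPt]; field_simp
  have hvu : vPt a = a * (uPt a + 1) := by rw [uPt, vPt]; field_simp; ring
  have hhalf : (1/2 : ℝ) ∈ Ioo (0:ℝ) 1 := by norm_num
  -- the word and its reduction
  set w : List (Letter m) := wordAtN ω 0 (N+1) with hw
  obtain ⟨s, hs⟩ : ∃ s, red w = some s := by
    have := hω 0 (N+1)
    rw [DyckAdmissible] at this
    exact Option.ne_none_iff_exists'.mp this
  set A : List (Fin m) := aIdx s with hA
  have hDl : Dlist w A = some (bIdx s) := by
    have := dlist_of_red w s hs []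
    simpa using this
  have hwlen : w.length = N+1 := by rw [hw, wordAtN, List.length_ofFn]
  -- the modified itinerary
  set ω' : ℕ → Letter m := fun n => if n ≤ N then ω n else Sum.inl ⟨n % 2, by omega⟩
    with hω'
  have hω'le : ∀ n ≤ N, ω' n = ω n := fun n hn => by simp [hω', hn]
  have hω'gt : ∀ n, N < n → ω' n = Sum.inl ⟨n % 2, by omega⟩ := fun n hn => by
    simp [hω', Nat.not_le.mpr hn]
  -- x backward values are in (0,1)
  have hxb : ∀ k, xbk m a ω' N k ∈ Ioo (0:ℝ) 1 := by
    intro k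
    induction k with
    | zero =>
      rw [xbk]
      split
      · exact hu01
      · exact hv01
    | succ k ih =>
      rw [xbk]
      cases ω' (N - k) with
      | inl i =>
        have hi1 : ((i:ℝ)+1) ≤ (m:ℝ) := by exact_mod_cast i.2
        have h0 : (0:ℝ) ≤ (i:ℝ) := by positivity
        rw [gbr]
        constructor
        · nlinarith [ih.1]
        · nlinarith [ih.2]
      | inr j =>
        rw [gbr]
        constructor
        · nlinarith [ih.1, ih.2]
        · nlinarith [ih.1, ih.2]
  -- X relations
  set X : ℕ → ℝ := Xfull m a ω' N with hX
  have hX1 : ∀ n ≤ N, X n = gbr m a (ω' n) (X (n+1)) := by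
    intro n hn
    rw [hX, Xfull, Xfull, if_pos (by omega : n ≤ N+1), if_pos (by omega : n+1 ≤ N+1),
      show N+1-n = (N-n)+1 by omega, xbk, show N-(N-n) = n by omega,
      show N+1-(n+1) = N-n by omega]
  have hX2 : ∀ n, N+1 ≤ n → X n = (if n % 2 = 0 then uPt a else vPt a) := by
    intro n hn
    rcases eq_or_lt_of_le hn with h | h
    · rw [hX, Xfull, if_pos (by omega : n ≤ N+1), show N+1-n = 0 by omega, xbk, ← h]
    · rw [hX, Xfull, if_neg (by omega)]
  have hX01 : ∀ n, X n ∈ Ioo (0:ℝ) 1 := by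
    intro n
    by_cases hn : n ≤ N+1
    · rw [hX, Xfull, if_pos hn]; exact hxb _
    · rw [hX, Xfull, if_neg hn]
      split
      · exact hu01
      · exact hv01
  -- Y values
  set Y : ℕ → ℝ := Yfull m ω' N A with hY
  have hinv : ∀ k ≤ N+1, ∃ d, Dlist (w.drop (N+1-k)) A = some d ∧
      ybk m ω' N A k = enc d (1/2) := by
    intro k
    induction k with
    | zero =>
      intro _
      refine ⟨A, ?_, rfl⟩
      have hdr : w.drop (N+1) = [] := List.drop_eq_nil_of_le (by omega)
      rw [show N+1-0 = N+1 from rfl, hdr]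
      rfl
    | succ k ih =>
      intro hk
      obtain ⟨d, hD, hYk⟩ := ih (by omega)
      set n := N - k with hn
      have hn1 : N+1-k = n+1 := by omega
      have hn2 : N+1-(k+1) = n := by omega
      rw [hn1] at hD
      have hdrop : w.drop n = ω n :: w.drop (n+1) := by
        rw [List.drop_eq_getElem_cons (by omega : n < w.length)]
        congr 1
        simp only [hw, wordAtN, List.getElem_ofFn]
        simp
      have hne : Dlist (w.drop n) A ≠ none := by
        intro hcon
        have h2 : Dlist w A = none := by
          rw [show w = w.take n ++ w.drop n from (List.take_append_drop n w).symm,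
            Dlist_append, hcon]
          rfl
        rw [hDl] at h2
        simp at h2
      have hωn : ω' (N - k) = ω n := hω'le n (by omega)
      rw [hn2]
      cases hc : ω n with
      | inl i =>
        rw [hdrop, hc] at hne ⊢
        rw [Dlist_cons_inl, hD] at hne ⊢
        cases d with
        | nil => exact absurd rfl hne
        | cons i' d' =>
          have hii : i' = i := by
            by_contra hcon
            simp [hcon] at hne
          subst hii
          refine ⟨d', by simp, ?_⟩
          rw [ybk, hωn, hc, ystep, hYk, enc_cons]
          field_simp; ring
      | inr j =>
        rw [hdrop, hc, Dlist_cons_inr, hD]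
        refine ⟨j :: d, rfl, ?_⟩
        rw [ybk, hωn, hc, ystep, hYk, enc_cons]
        ring
  have hinv' : ∀ n ≤ N+1, ∃ d, Dlist (w.drop n) A = some d ∧ Y n = enc d (1/2) := by
    intro n hn
    obtain ⟨d, hD, hYk⟩ := hinv (N+1-n) (by omega)
    rw [show N+1-(N+1-n) = n by omega] at hD
    exact ⟨d, hD, by rw [hY, Yfull, if_pos hn]; exact hYk⟩
  have hyfw : ∀ k, yfw m N (enc A (1/2)) k ∈ Ioo (0:ℝ) 1 := by
    intro k
    induction k with
    | zero => exact enc_mem hm0 A hhalf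
    | succ k ih =>
      rw [yfw]
      have h2 : ((N+1+k) % 2 : ℕ) ≤ 1 := by omega
      have h2' : (((N+1+k) % 2 : ℕ) : ℝ) ≤ 1 := by exact_mod_cast h2
      have h0 : (0:ℝ) ≤ (((N+1+k) % 2 : ℕ) : ℝ) := by positivity
      constructor
      · apply div_pos (by linarith [ih.1]) hm'
      · rw [div_lt_one hm']; linarith [ih.2]
  have hY01 : ∀ n, Y n ∈ Ioo (0:ℝ) 1 := by
    intro n
    by_cases hn : n ≤ N+1
    · obtain ⟨d, _, hYe⟩ := hinv' n hn
      rw [hYe]; exact enc_mem hm0 d hhalf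
    · rw [hY, Yfull, if_neg hn]; exact hyfw _
  have hYgt : ∀ n, N+1 ≤ n → Y n = yfw m N (enc A (1/2)) (n - (N+1)) := by
    intro n hn
    rcases eq_or_lt_of_le hn with h | h
    · rw [hY, Yfull, if_pos (by omega), show N+1-n = 0 by omega, ← h, Nat.sub_self]
      rfl
    · rw [hY, Yfull, if_neg (by omega)]
  -- main step lemma
  have hstep : ∀ n, baker2 m a (X n, Y n) = (X (n+1), Y (n+1)) ∧
      (X n, Y n) ∈ interior (Omega2 m a (ω' n)) := by
    intro n
    by_cases hn : n ≤ N
    · -- use invariants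
      obtain ⟨dn, hDn, hYn⟩ := hinv' n (by omega)
      obtain ⟨dn1, hDn1, hYn1⟩ := hinv' (n+1) (by omega)
      have hdrop : w.drop n = ω n :: w.drop (n+1) := by
        rw [List.drop_eq_getElem_cons (by omega : n < w.length)]
        congr 1
        simp only [hw, wordAtN, List.getElem_ofFn]
        simp
      have hXr := hX1 n hn
      have hωn := hω'le n hn
      cases hc : ω n with
      | inl i =>
        rw [hdrop, hc, Dlist_cons_inl, hDn1] at hDn
        have hcons : dn1 = i :: dn := by
          cases dn1 with
          | nil => simp at hDn
          | cons i' d' =>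
            by_cases hii : i' = i
            · subst hii; simp at hDn; rw [hDn]
            · simp [hii] at hDn
        have hYr : Y (n+1) = ((i:ℝ) + Y n) / m := by
          rw [hYn1, hcons, enc_cons, hYn]
        have hxmem : X n ∈ Ioo ((i:ℝ)*a) (((i:ℝ)+1)*a) := by
          rw [hXr, hωn, hc, gbr]
          have h01 := hX01 (n+1)
          have h0 : (0:ℝ) ≤ (i:ℝ) := by positivity
          constructor
          · nlinarith [h01.1]
          · nlinarith [h01.2]
        have hb := baker2_step_inl ha0 i (p := (X n, Y n)) hxmem
        constructor
        · rw [hb.1]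
          have hx' : X n / a - i = X (n+1) := by
            rw [hXr, hωn, hc, gbr]
            field_simp; ring
          rw [hx', hYr]
          norm_num [add_comm]
        · rw [hωn, hc, mem_interior_inl_iff]
          exact ⟨hxmem, hY01 n⟩
      | inr j =>
        rw [hdrop, hc, Dlist_cons_inr, hDn1] at hDn
        have hcons : dn = j :: dn1 := by
          simp at hDn
          rw [← hDn]
        have hymem : Y n ∈ Ioo ((j:ℝ)/m) (((j:ℝ)+1)/m) := by
          rw [hYn, hcons]
          exact enc_cons_mem hm0 j dn1 hhalf
        have hxmem : X n ∈ Ioo ((m:ℝ)*a) 1 := by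
          rw [hXr, hωn, hc, gbr]
          have h01 := hX01 (n+1)
          constructor
          · nlinarith [h01.1]
          · nlinarith [h01.2]
        have hb := baker2_step_inr hm0 ha0 ham j (p := (X n, Y n)) hxmem hymem
        constructor
        · rw [hb.1]
          have hx' : (X n - m*a)/(1 - m*a) = X (n+1) := by
            rw [hXr, hωn, hc, gbr]
            field_simp; ring
          have hy' : (m:ℝ) * Y n - j = Y (n+1) := by
            rw [hYn, hcons, enc_cons, hYn1]
            field_simp; ring
          rw [hx', hy']
        · rw [hωn, hc, mem_interior_inr_iff hm0]
          exact ⟨hxmem, hymem⟩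
    · -- tail regime
      have hn' : N+1 ≤ n := by omega
      have hωn := hω'gt n (by omega)
      have hXn := hX2 n hn'
      have hXn1 := hX2 (n+1) (by omega)
      have hYn := hYgt n hn'
      have hYn1 := hYgt (n+1) (by omega)
      have hYr : Y (n+1) = (Y n + ((n % 2 : ℕ):ℝ)) / m := by
        rw [hYn, hYn1, show n+1-(N+1) = (n-(N+1))+1 by omega, yfw,
          show N+1+(n-(N+1)) = n by omega]
      set i : Fin m := ⟨n % 2, by omega⟩ with hi
      have hival : ((i:ℕ):ℝ) = ((n % 2 : ℕ):ℝ) := by rw [hi]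
      have hxmem : X n ∈ Ioo ((i:ℝ)*a) (((i:ℝ)+1)*a) := by
        rw [hXn]
        rcases Nat.even_or_odd n with he | ho
        · have h2 : n % 2 = 0 := Nat.even_iff.mp he
          rw [if_pos h2, hival, h2]
          push_cast
          constructor
          · simpa using hu.1
          · simpa using hu.2
        · have h2 : n % 2 = 1 := Nat.odd_iff.mp ho
          rw [if_neg (by omega), hival, h2]
          push_cast
          constructor
          · simpa using hv.1
          · rw [show ((1:ℝ)+1)*a = 2*a by ring]; exact hv.2
      have hb := baker2_step_inl ha0 i (p := (X n, Y n)) hxmem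
      constructor
      · rw [hb.1]
        have hx' : X n / a - i = X (n+1) := by
          rw [hXn, hXn1, hival]
          rcases Nat.even_or_odd n with he | ho
          · have h2 : n % 2 = 0 := Nat.even_iff.mp he
            have h3 : (n+1) % 2 = 1 := by omega
            rw [if_pos h2, if_neg (by omega), h2, huv]
            push_cast
            field_simp; ring
          · have h2 : n % 2 = 1 := Nat.odd_iff.mp ho
            have h3 : (n+1) % 2 = 0 := by omega
            rw [if_neg (by omega), if_pos h3, h2, hvu]
            push_cast
            field_simp; ring
        rw [hx', hYr, hival]
      · rw [hωn, mem_interior_inl_iff]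
        exact ⟨hxmem, hY01 n⟩
  -- assemble
  refine ⟨ω', ⟨(X 0, Y 0), ?_⟩, hω'le⟩
  have hiter : ∀ n, (baker2 m a)^[n] (X 0, Y 0) = (X n, Y n) := by
    intro n
    induction n with
    | zero => rfl
    | succ n ih => rw [Function.iterate_succ_apply', ih, (hstep n).1]
  intro n
  rw [hiter n]
  exact (hstep n).2

end Realize
end HD


namespace HD
open Set Filter Topology

lemma isClosed_dyck {m : ℕ} : IsClosed {ω : ℕ → Letter m | DyckSeqPlus ω} := by
  have h : {ω : ℕ → Letter m | DyckSeqPlus ω} =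
      ⋂ (i : ℕ), ⋂ (n : ℕ),
        (fun (ω : ℕ → Letter m) (k : Fin n) => ω (i + k)) ⁻¹'
          {g : Fin n → Letter m | DyckAdmissible (List.ofFn g)} := by
    ext ω
    simp only [Set.mem_iInter, Set.mem_preimage, Set.mem_setOf_eq]
    rfl
  rw [h]
  refine isClosed_iInter fun i => isClosed_iInter fun n =>
    IsClosed.preimage ?_ (isClosed_discrete _)
  exact continuous_pi fun k => continuous_apply (i + (k:ℕ))

def codingSet (m : ℕ) (a : ℝ) : Set (ℕ → Letter m) :=
  {ω | ∃ p : ℝ × ℝ, ∀ n, (baker2 m a)^[n] p ∈ interior (Omega2 m a (ω n))}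

lemma closure_coding {m : ℕ} (hm : 2 ≤ m) {a : ℝ} (ha0 : 0 < a) (ham : (m:ℝ)*a < 1) :
    closure (codingSet m a) = {ω | DyckSeqPlus ω} := by
  apply subset_antisymm
  · apply closure_minimal _ isClosed_dyck
    rintro ω ⟨p, hp⟩
    exact codes_dyck (by omega) ha0 ham p ω hp
  · intro ω hω
    choose ω'' h1 h2 using realize hm ha0 ham ω hω
    apply mem_closure_of_tendsto (f := ω'') (b := atTop) ?_
      (Filter.Eventually.of_forall h1)
    rw [tendsto_pi_nhds]
    intro n
    refine Filter.Tendsto.congr' ?_ (tendsto_const_nhds (x := ω n))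
    filter_upwards [Filter.eventually_ge_atTop n] with N hN
    exact (h2 N n hN).symm

def kappaEquiv (m : ℕ) : Fin (2*m) ≃ Letter m where
  toFun := kappa m
  invFun := fun c => match c with
    | Sum.inl i => ⟨(i:ℕ), by have := i.2; omega⟩
    | Sum.inr j => ⟨m + (j:ℕ), by have := j.2; omega⟩
  left_inv := fun i => by
    rcases lt_or_ge (i:ℕ) m with h | h
    · rw [kappa, dif_pos h]
    · rw [kappa, dif_neg (by omega)]
      exact Fin.ext (by simp; omega)
  right_inv := fun c => by
    cases c with
    | inl i => rw [kappa, dif_pos i.2]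
    | inr j =>
      show kappa m (⟨m + (j:ℕ), by have := j.2; omega⟩ : Fin (2*m)) = Sum.inr j
      rw [kappa, dif_neg (by simp)]
      exact congrArg Sum.inr (Fin.ext (by simp))

def kappaHomeo (m : ℕ) : Fin (2*m) ≃ₜ Letter m :=
  { kappaEquiv m with
    continuous_toFun := continuous_of_discreteTopology
    continuous_invFun := continuous_of_discreteTopology }

end HD

/-- The coordinatewise extension of `κ` is a homeomorphism of
the full shifts which maps `Σ_{HC}⁺` onto `Σ_D⁺` and commutes with the shifts;
in particular `Σ_{HC}⁺` and `Σ_D⁺` are isomorphic subshifts. -/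
theorem heterochaos_iso_dyck (m : ℕ) (hm : 2 ≤ m) (a : ℝ)
    (ha0 : 0 < a) (ha1 : a < 1 / m) :
    ∃ h : (ℕ → Fin (2 * m)) ≃ₜ (ℕ → Letter m),
      (∀ (ω : ℕ → Fin (2 * m)) (n : ℕ), h ω n = kappa m (ω n)) ∧
      h '' SigmaHCplusF m a = {ω | DyckSeqPlus ω} ∧
      ∀ ω : ℕ → Fin (2 * m), h (fun n => ω (n + 1)) = fun n => h ω (n + 1) := by
  have hm' : (0:ℝ) < m := by exact_mod_cast (by omega : 0 < m)
  have ham : (m:ℝ) * a < 1 := by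
    rw [lt_div_iff₀ hm'] at ha1
    linarith [ha1]
  refine ⟨Homeomorph.piCongrRight (fun _ : ℕ => HD.kappaHomeo m), fun ω n => rfl, ?_,
    fun ω => rfl⟩
  rw [SigmaHCplusF, Homeomorph.image_closure]
  have himg : (Homeomorph.piCongrRight fun _ : ℕ => HD.kappaHomeo m) ''
      {ω | ∃ p : ℝ × ℝ, ∀ n : ℕ,
        (baker2 m a)^[n] p ∈ interior (Omega2 m a (kappa m (ω n)))}
      = HD.codingSet m a := by
    ext ω'
    constructor
    · rintro ⟨ω, hω, rfl⟩
      exact hω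
    · rintro ⟨p, hp⟩
      refine ⟨fun n => (HD.kappaEquiv m).symm (ω' n), ⟨p, fun n => ?_⟩, ?_⟩
      · rw [show kappa m ((HD.kappaEquiv m).symm (ω' n)) = ω' n from
          (HD.kappaEquiv m).apply_symm_apply _]
        exact hp n
      · funext n
        exact (HD.kappaEquiv m).apply_symm_apply _
  rw [himg, HD.closure_coding hm ha0 ham]
end

section
/- If ω belongs to the set A = {ω ∈ Σ_D : liminf_{i→∞} H_i(ω) = −∞ or liminf_{i→−∞} H_i(ω) = −∞}, then the fiber π̄^{−1}(ω) of the coding map of the 3-dimensional heterochaos baker map contains at most one point; consequently the restriction of π̄ to π̄^{−1}(A) is a homeomorphism onto its image. -/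
/-- The sign of a letter: `+1` for a left bracket, `-1` for a right bracket. -/
def lsign {m : ℕ} : Letter m → ℤ := Sum.elim (fun _ => 1) (fun _ => -1)

/-- The height function `H_i(ω)`: the excess of left brackets over right
brackets between positions `0` and `i`, with the paper's sign convention
for negative `i`. -/
def Hfun {m : ℕ} (ω : ℤ → Letter m) (i : ℤ) : ℤ :=
  if 0 ≤ i then ∑ k ∈ Finset.range i.toNat, lsign (ω k)
  else -∑ k ∈ Finset.range (-i).toNat, lsign (ω (i + k))

/-- Membership in the set `A ⊂ Σ_D`:
`liminf_{i→∞} H_i(ω) = -∞` or `liminf_{i→-∞} H_i(ω) = -∞`. -/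
def inA {m : ℕ} (ω : ℤ → Letter m) : Prop :=
  (∀ C : ℤ, ∃ᶠ i : ℤ in Filter.atTop, Hfun ω i < C) ∨
  (∀ C : ℤ, ∃ᶠ i : ℤ in Filter.atBot, Hfun ω i < C)

section Aux

variable {m : ℕ} {a b : ℝ}

/-- The expansion factor of the `x`-coordinate (reciprocal). -/
def cX {m : ℕ} (a : ℝ) : Letter m → ℝ := Sum.elim (fun _ => a) (fun _ => 1 - m * a)

/-- The contraction factor of the `z`-coordinate. -/
def cZ {m : ℕ} (b : ℝ) : Letter m → ℝ := Sum.elim (fun _ => 1 - m * b) (fun _ => b)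

lemma stripIndex_eq (hm : 2 ≤ m) {j : Fin m} {y : ℝ}
    (hy : y ∈ (if (j : ℕ) = m - 1 then Set.Icc ((j : ℝ) / m) 1
      else Set.Ico ((j : ℝ) / m) (((j : ℝ) + 1) / m))) :
    stripIndex m y = (j : ℤ) := by
  have hm0 : (0 : ℝ) < m := by positivity
  split_ifs at hy with hj
  · have hjz : (j : ℤ) = (m : ℤ) - 1 := by
      have := j.isLt; omega
    have h1 : ((m : ℤ) - 1 : ℤ) ≤ ⌊(m : ℝ) * y⌋ := by
      rw [Int.le_floor]
      have hjy : (j : ℝ) ≤ m * y := by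
        calc (j : ℝ) = m * ((j : ℝ) / m) := by field_simp
          _ ≤ m * y := mul_le_mul_of_nonneg_left hy.1 (le_of_lt hm0)
      have hjr : ((j : ℕ) : ℝ) = (m : ℝ) - 1 := by
        rw [hj]; push_cast [Nat.cast_sub (by omega : 1 ≤ m)]; ring
      push_cast
      linarith
    unfold stripIndex
    omega
  · have hfl : ⌊(m : ℝ) * y⌋ = (j : ℤ) := by
      rw [Int.floor_eq_iff]
      constructor
      · push_cast
        calc (j : ℝ) = m * ((j : ℝ) / m) := by field_simp
          _ ≤ m * y := mul_le_mul_of_nonneg_left hy.1 (le_of_lt hm0)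
      · push_cast
        calc (m : ℝ) * y < m * (((j : ℝ) + 1) / m) :=
              mul_lt_mul_of_pos_left hy.2 hm0
          _ = (j : ℝ) + 1 := by field_simp
    have hjle : (j : ℤ) ≤ (m : ℤ) - 1 := by have := j.isLt; omega
    unfold stripIndex
    omega

lemma omega3_coords (hm : 2 ≤ m) (ha0 : 0 < a) (ha1 : a < 1 / m) {γ : Letter m}
    {p : ℝ × ℝ × ℝ} (hp : p ∈ Omega3 m a γ) :
    p.1 ∈ Set.Icc (0 : ℝ) 1 ∧ p.2.1 ∈ Set.Icc (0 : ℝ) 1 ∧ p.2.2 ∈ Set.Icc (0 : ℝ) 1 := by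
  have hm0 : (0 : ℝ) < m := by positivity
  have hma1 : (m : ℝ) * a < 1 := by
    rw [lt_div_iff₀ hm0] at ha1; linarith [ha1]
  obtain ⟨hp2, hz⟩ := hp
  refine ⟨?_, ?_, hz⟩
  · cases γ with
    | inl i =>
        obtain ⟨⟨hx1, hx2⟩, _⟩ := hp2
        have hi1 : ((i : ℝ) + 1) ≤ m := by
          have := i.isLt; push_cast; exact_mod_cast Nat.succ_le_of_lt this
        constructor
        · have : (0 : ℝ) ≤ (i : ℝ) * a := by positivity
          linarith
        · have : ((i : ℝ) + 1) * a ≤ (m : ℝ) * a :=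
            mul_le_mul_of_nonneg_right hi1 (le_of_lt ha0)
          linarith
    | inr j =>
        obtain ⟨⟨hx1, hx2⟩, _⟩ := hp2
        constructor
        · have : (0 : ℝ) ≤ (m : ℝ) * a := by positivity
          linarith
        · exact hx2
  · cases γ with
    | inl i => exact hp2.2
    | inr j =>
        have hy := hp2.2
        have hj0 : (0 : ℝ) ≤ (j : ℝ) / m := by positivity
        have hj1 : ((j : ℝ) + 1) / m ≤ 1 := by
          rw [div_le_one hm0]
          have := j.isLt; push_cast; exact_mod_cast Nat.succ_le_of_lt this
        split_ifs at hy with hjtop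
        · exact ⟨le_trans hj0 hy.1, hy.2⟩
        · exact ⟨le_trans hj0 hy.1, le_trans (le_of_lt hy.2) hj1⟩

lemma step_rel (hm : 2 ≤ m) (ha0 : 0 < a) (ha1 : a < 1 / m) (hb0 : 0 < b) (hb1 : b < 1 / m)
    {γ : Letter m} {p q : ℝ × ℝ × ℝ} (hp : p ∈ Omega3 m a γ) (hq : q ∈ Omega3 m a γ) :
    p.1 - q.1 = cX a γ * ((baker3 m a b p).1 - (baker3 m a b q).1) ∧
    (baker3 m a b p).2.1 - (baker3 m a b q).2.1 = (m : ℝ) ^ (-lsign γ) * (p.2.1 - q.2.1) ∧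
    (baker3 m a b p).2.2 - (baker3 m a b q).2.2 = cZ b γ * (p.2.2 - q.2.2) := by
  have hm0 : (0 : ℝ) < m := by positivity
  have hma1 : (m : ℝ) * a < 1 := by rw [lt_div_iff₀ hm0] at ha1; linarith
  cases γ with
  | inl i =>
      obtain ⟨⟨⟨hpx1, hpx2⟩, _⟩, _⟩ := hp
      obtain ⟨⟨⟨hqx1, hqx2⟩, _⟩, _⟩ := hq
      have hi1 : ((i : ℝ) + 1) ≤ m := by
        have := i.isLt; push_cast; exact_mod_cast Nat.succ_le_of_lt this
      have hia : ((i : ℝ) + 1) * a ≤ (m : ℝ) * a :=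
        mul_le_mul_of_nonneg_right hi1 (le_of_lt ha0)
      have hplt : p.1 < (m : ℝ) * a := lt_of_lt_of_le hpx2 hia
      have hqlt : q.1 < (m : ℝ) * a := lt_of_lt_of_le hqx2 hia
      have hfp : ⌊p.1 / a⌋ = (i : ℤ) := by
        rw [Int.floor_eq_iff]
        constructor
        · push_cast; rw [le_div_iff₀ ha0]; exact hpx1
        · push_cast; rw [div_lt_iff₀ ha0]; exact hpx2
      have hfq : ⌊q.1 / a⌋ = (i : ℤ) := by
        rw [Int.floor_eq_iff]
        constructor
        · push_cast; rw [le_div_iff₀ ha0]; exact hqx1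
        · push_cast; rw [div_lt_iff₀ ha0]; exact hqx2
      have ha' : a ≠ 0 := ne_of_gt ha0
      have hm' : (m : ℝ) ≠ 0 := ne_of_gt hm0
      simp [baker3, baker2, bakerF, hplt, hqlt, Int.fract, hfp, hfq,
        cX, cZ, lsign]
      push_cast
      refine ⟨by field_simp, by ring, by ring⟩
  | inr j =>
      obtain ⟨⟨⟨hpx1, hpx2⟩, hpy⟩, _⟩ := hp
      obtain ⟨⟨⟨hqx1, hqx2⟩, hqy⟩, _⟩ := hq
      have hpnlt : ¬ p.1 < (m : ℝ) * a := not_lt.mpr hpx1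
      have hqnlt : ¬ q.1 < (m : ℝ) * a := not_lt.mpr hqx1
      have hsp : stripIndex m p.2.1 = (j : ℤ) := stripIndex_eq hm hpy
      have hsq : stripIndex m q.2.1 = (j : ℤ) := stripIndex_eq hm hqy
      have h1 : (1 : ℝ) - m * a ≠ 0 := by linarith
      simp [baker3, baker2, bakerF, hpnlt, hqnlt, hsp, hsq,
        cX, cZ, lsign]
      refine ⟨by field_simp; ring, by ring, by ring⟩

section Orbit

variable {ω ω' : ℤ → Letter m} {o o' : ℤ → ℝ × ℝ × ℝ}

lemma x_bound (hm : 2 ≤ m) (ha0 : 0 < a) (ha1 : a < 1 / m) (hb0 : 0 < b) (hb1 : b < 1 / m)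
    (ho : ∀ n : ℤ, o (n + 1) = baker3 m a b (o n))
    (ho' : ∀ n : ℤ, o' (n + 1) = baker3 m a b (o' n))
    (hΩ : ∀ n : ℤ, o n ∈ Omega3 m a (ω n))
    (hΩ' : ∀ n : ℤ, o' n ∈ Omega3 m a (ω' n)) :
    ∀ (n : ℕ) (j : ℤ), (∀ k : ℕ, k < n → ω' (j + k) = ω (j + k)) →
      |(o j).1 - (o' j).1| ≤ (max a (1 - m * a)) ^ n := by
  intro n
  induction n with
  | zero =>
      intro j _
      have h1 := (omega3_coords hm ha0 ha1 (hΩ j)).1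
      have h2 := (omega3_coords hm ha0 ha1 (hΩ' j)).1
      simp only [pow_zero]
      rw [abs_sub_le_iff]
      constructor <;> [linarith [h1.1, h1.2, h2.1, h2.2]; linarith [h1.1, h1.2, h2.1, h2.2]]
  | succ n ih =>
      intro j hag
      have hag0 : ω' j = ω j := by
        have := hag 0 (Nat.succ_pos n); simpa using this
      have hq : o' j ∈ Omega3 m a (ω j) := hag0 ▸ hΩ' j
      have hrel := (step_rel hm ha0 ha1 hb0 hb1 (hΩ j) hq).1
      rw [← ho j, ← ho' j] at hrel
      have hih := ih (j + 1) (fun k hk => by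
        have h2 := hag (k + 1) (by omega)
        have he : j + 1 + (k : ℤ) = j + ((k + 1 : ℕ) : ℤ) := by push_cast; ring
        rw [he]; exact h2)
      have hcx : |cX a (ω j)| ≤ max a (1 - m * a) := by
        have hm0 : (0 : ℝ) < m := by positivity
        have hma1 : (m : ℝ) * a < 1 := by rw [lt_div_iff₀ hm0] at ha1; linarith
        cases ω j with
        | inl i => simp [cX, abs_of_pos ha0]
        | inr i => simp [cX, abs_of_pos (by linarith : (0:ℝ) < 1 - m * a)]
      calc |(o j).1 - (o' j).1| = |cX a (ω j)| * |(o (j+1)).1 - (o' (j+1)).1| := by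
            rw [hrel, abs_mul]
        _ ≤ (max a (1 - m * a)) * (max a (1 - m * a)) ^ n := by
            apply mul_le_mul hcx hih (abs_nonneg _)
            exact le_trans (abs_nonneg _) hcx
        _ = (max a (1 - m * a)) ^ (n + 1) := by ring

lemma z_bound (hm : 2 ≤ m) (ha0 : 0 < a) (ha1 : a < 1 / m) (hb0 : 0 < b) (hb1 : b < 1 / m)
    (ho : ∀ n : ℤ, o (n + 1) = baker3 m a b (o n))
    (ho' : ∀ n : ℤ, o' (n + 1) = baker3 m a b (o' n))
    (hΩ : ∀ n : ℤ, o n ∈ Omega3 m a (ω n))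
    (hΩ' : ∀ n : ℤ, o' n ∈ Omega3 m a (ω' n)) :
    ∀ (n : ℕ) (j : ℤ), (∀ k : ℕ, k < n → ω' (j + k) = ω (j + k)) →
      |(o (j + n)).2.2 - (o' (j + n)).2.2| ≤ (max b (1 - m * b)) ^ n := by
  intro n
  induction n with
  | zero =>
      intro j _
      have h1 := (omega3_coords hm ha0 ha1 (hΩ j)).2.2
      have h2 := (omega3_coords hm ha0 ha1 (hΩ' j)).2.2
      simp only [Nat.cast_zero, add_zero, pow_zero]
      rw [abs_sub_le_iff]
      constructor <;> linarith [h1.1, h1.2, h2.1, h2.2]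
  | succ n ih =>
      intro j hag
      have hagn : ω' (j + n) = ω (j + n) := hag n (by omega)
      have hq : o' (j + n) ∈ Omega3 m a (ω (j + n)) := hagn ▸ hΩ' (j + n)
      have hrel := (step_rel hm ha0 ha1 hb0 hb1 (hΩ (j + n)) hq).2.2
      rw [← ho (j + n), ← ho' (j + n)] at hrel
      have hih := ih j (fun k hk => hag k (by omega))
      have hcz : |cZ b (ω (j + n))| ≤ max b (1 - m * b) := by
        have hm0 : (0 : ℝ) < m := by positivity
        have hmb1 : (m : ℝ) * b < 1 := by rw [lt_div_iff₀ hm0] at hb1; linarith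
        cases ω (j + n) with
        | inl i => simp [cZ, abs_of_pos (by linarith : (0:ℝ) < 1 - m * b)]
        | inr i => simp [cZ, abs_of_pos hb0]
      have hcast : j + ((n : ℤ) + 1) = (j + n) + 1 := by ring
      calc |(o (j + ((n : ℕ) + 1 : ℕ))).2.2 - (o' (j + ((n : ℕ) + 1 : ℕ))).2.2|
          = |cZ b (ω (j + n))| * |(o (j + n)).2.2 - (o' (j + n)).2.2| := by
            push_cast
            rw [hcast, hrel, abs_mul]
        _ ≤ (max b (1 - m * b)) * (max b (1 - m * b)) ^ n := by
            apply mul_le_mul hcz hih (abs_nonneg _)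
            exact le_trans (abs_nonneg _) hcz
        _ = (max b (1 - m * b)) ^ (n + 1) := by ring

lemma y_rel (hm : 2 ≤ m) (ha0 : 0 < a) (ha1 : a < 1 / m) (hb0 : 0 < b) (hb1 : b < 1 / m)
    (ho : ∀ n : ℤ, o (n + 1) = baker3 m a b (o n))
    (ho' : ∀ n : ℤ, o' (n + 1) = baker3 m a b (o' n))
    (hΩ : ∀ n : ℤ, o n ∈ Omega3 m a (ω n))
    (hΩ' : ∀ n : ℤ, o' n ∈ Omega3 m a (ω' n)) :
    ∀ (n : ℕ) (j : ℤ), (∀ k : ℕ, k < n → ω' (j + k) = ω (j + k)) →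
      (o (j + n)).2.1 - (o' (j + n)).2.1 =
        (m : ℝ) ^ (-(∑ k ∈ Finset.range n, lsign (ω (j + k)))) * ((o j).2.1 - (o' j).2.1) := by
  have hm' : (m : ℝ) ≠ 0 := by positivity
  intro n
  induction n with
  | zero => intro j _; simp
  | succ n ih =>
      intro j hag
      have hagn : ω' (j + n) = ω (j + n) := hag n (by omega)
      have hq : o' (j + n) ∈ Omega3 m a (ω (j + n)) := hagn ▸ hΩ' (j + n)
      have hrel := (step_rel hm ha0 ha1 hb0 hb1 (hΩ (j + n)) hq).2.1
      rw [← ho (j + n), ← ho' (j + n)] at hrel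
      have hih := ih j (fun k hk => hag k (by omega))
      have hcast : j + ((n : ℤ) + 1) = (j + n) + 1 := by ring
      have hsum : (∑ k ∈ Finset.range (n + 1), lsign (ω (j + k)))
          = (∑ k ∈ Finset.range n, lsign (ω (j + k))) + lsign (ω (j + n)) :=
        Finset.sum_range_succ _ _
      push_cast
      rw [hcast, hrel, hih, hsum, neg_add, zpow_add₀ hm', ]
      ring

end Orbit

/-- The key quantitative estimate on a window of agreement. -/
lemma window_bound (hm : 2 ≤ m) (ha0 : 0 < a) (ha1 : a < 1 / m) (hb0 : 0 < b) (hb1 : b < 1 / m)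
    {ω ω' : ℤ → Letter m} {p q : ℝ × ℝ × ℝ}
    (hp : Codes3 m a b p ω) (hq : Codes3 m a b q ω') (N : ℕ)
    (hag : ∀ n : ℤ, |n| ≤ (N : ℤ) → ω' n = ω n) :
    |p.1 - q.1| ≤ (max a (1 - m * a)) ^ N ∧
    (∀ i : ℤ, |i| ≤ (N : ℤ) → |p.2.1 - q.2.1| ≤ (m : ℝ) ^ (Hfun ω i)) ∧
    |p.2.2 - q.2.2| ≤ (max b (1 - m * b)) ^ N := by
  obtain ⟨o, ho0, ho, hoΩ⟩ := hp
  obtain ⟨o', ho0', ho', hoΩ'⟩ := hq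
  have hΩ : ∀ n : ℤ, o n ∈ Omega3 m a (ω n) := fun n => interior_subset (hoΩ n)
  have hΩ' : ∀ n : ℤ, o' n ∈ Omega3 m a (ω' n) := fun n => interior_subset (hoΩ' n)
  have hm0 : (0 : ℝ) < m := by positivity
  have hm1 : (1 : ℝ) < m := by exact_mod_cast lt_of_lt_of_le one_lt_two (by exact_mod_cast hm)
  subst ho0 ho0'
  refine ⟨?_, ?_, ?_⟩
  · have := x_bound hm ha0 ha1 hb0 hb1 ho ho' hΩ hΩ' N 0
      (fun k hk => hag (0 + k) (by simp; omega))
    simpa using this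
  · intro i hi
    have hiN : i ≤ (N : ℤ) := le_trans (le_abs_self i) hi
    have hiN' : -(N : ℤ) ≤ i := neg_le_of_abs_le hi
    rcases le_or_gt 0 i with hi0 | hi0
    · -- forward case
      have htn : ((i.toNat : ℤ)) = i := Int.toNat_of_nonneg hi0
      have hyr := y_rel hm ha0 ha1 hb0 hb1 ho ho' hΩ hΩ' i.toNat 0
        (fun k hk => hag (0 + k) (by rw [abs_le]; omega))
      rw [zero_add, htn] at hyr
      have hHf : Hfun ω i = ∑ k ∈ Finset.range i.toNat, lsign (ω k) := by
        simp [Hfun, hi0]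
      have hS : ∑ k ∈ Finset.range i.toNat, lsign (ω ((0 : ℤ) + k))
          = Hfun ω i := by rw [hHf]; congr 1; ext k; rw [zero_add]
      rw [hS] at hyr
      -- hyr : dy i = m ^ (-H) * dy 0
      have h1 : |(o 0).2.1 - (o' 0).2.1|
          = (m : ℝ) ^ (Hfun ω i) * |(o i).2.1 - (o' i).2.1| := by
        rw [hyr, abs_mul, abs_of_pos (zpow_pos hm0 _), ← mul_assoc,
          ← zpow_add₀ (by positivity : (m : ℝ) ≠ 0)]
        simp
      have h2 : |(o i).2.1 - (o' i).2.1| ≤ 1 := by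
        have ha' := (omega3_coords hm ha0 ha1 (hΩ i)).2.1
        have hb' := (omega3_coords hm ha0 ha1 (hΩ' i)).2.1
        rw [abs_sub_le_iff]
        constructor <;> linarith [ha'.1, ha'.2, hb'.1, hb'.2]
      calc |(o 0).2.1 - (o' 0).2.1|
          = (m : ℝ) ^ (Hfun ω i) * |(o i).2.1 - (o' i).2.1| := h1
        _ ≤ (m : ℝ) ^ (Hfun ω i) * 1 :=
            mul_le_mul_of_nonneg_left h2 (le_of_lt (zpow_pos hm0 _))
        _ = (m : ℝ) ^ (Hfun ω i) := mul_one _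
    · -- backward case
      have htn : ((-i).toNat : ℤ) = -i := Int.toNat_of_nonneg (by omega)
      have hyr := y_rel hm ha0 ha1 hb0 hb1 ho ho' hΩ hΩ' (-i).toNat i
        (fun k hk => hag (i + k) (by rw [abs_le]; omega))
      rw [htn] at hyr
      have hii : i + -i = 0 := by ring
      rw [hii] at hyr
      have hHf : Hfun ω i = -∑ k ∈ Finset.range (-i).toNat, lsign (ω (i + k)) := by
        simp [Hfun, not_le.mpr hi0]
      rw [← hHf] at hyr
      have h2 : |(o i).2.1 - (o' i).2.1| ≤ 1 := by
        have ha' := (omega3_coords hm ha0 ha1 (hΩ i)).2.1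
        have hb' := (omega3_coords hm ha0 ha1 (hΩ' i)).2.1
        rw [abs_sub_le_iff]
        constructor <;> linarith [ha'.1, ha'.2, hb'.1, hb'.2]
      calc |(o 0).2.1 - (o' 0).2.1|
          = (m : ℝ) ^ (Hfun ω i) * |(o i).2.1 - (o' i).2.1| := by
            rw [hyr, abs_mul, abs_of_pos (zpow_pos hm0 _)]
        _ ≤ (m : ℝ) ^ (Hfun ω i) * 1 :=
            mul_le_mul_of_nonneg_left h2 (le_of_lt (zpow_pos hm0 _))
        _ = (m : ℝ) ^ (Hfun ω i) := mul_one _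
  · have := z_bound hm ha0 ha1 hb0 hb1 ho ho' hΩ hΩ' N (-(N : ℤ))
      (fun k hk => hag (-(N : ℤ) + k) (by rw [abs_le]; omega))
    have h0 : -(N : ℤ) + (N : ℤ) = 0 := by ring
    rw [h0] at this
    exact this

end Aux

/-- For `ω ∈ A ∩ Σ_D`, the fiber `π̄⁻¹(ω)` of the coding map
of `f_{a,b}` contains at most one point; consequently the restriction of `π̄`
to `π̄⁻¹(A)` is a homeomorphism onto its image (the second clause expresses the
continuity of the inverse of this restriction). -/
theorem coding_injective_on_A (m : ℕ) (hm : 2 ≤ m) (a b : ℝ)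
    (ha0 : 0 < a) (ha1 : a < 1 / m) (hb0 : 0 < b) (hb1 : b < 1 / m) :
    (∀ ω : ℤ → Letter m, DyckSeq ω → inA ω →
      ∀ p q : ℝ × ℝ × ℝ, Codes3 m a b p ω → Codes3 m a b q ω → p = q) ∧
    (∀ (ω : ℤ → Letter m) (p : ℝ × ℝ × ℝ), DyckSeq ω → inA ω → Codes3 m a b p ω →
      ∀ ε : ℝ, 0 < ε → ∃ N : ℕ, ∀ (ω' : ℤ → Letter m) (q : ℝ × ℝ × ℝ),
        DyckSeq ω' → inA ω' → Codes3 m a b q ω' →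
        (∀ n : ℤ, |n| ≤ (N : ℤ) → ω' n = ω n) → dist q p < ε) := by
  have hm0 : (0 : ℝ) < m := by positivity
  have hm1 : (1 : ℝ) < m := by
    exact_mod_cast lt_of_lt_of_le one_lt_two (by exact_mod_cast hm)
  have hma1 : (m : ℝ) * a < 1 := by rw [lt_div_iff₀ hm0] at ha1; linarith
  have hmb1 : (m : ℝ) * b < 1 := by rw [lt_div_iff₀ hm0] at hb1; linarith
  have ha1' : a < 1 := by
    have : (1 : ℝ) / m ≤ 1 := by
      rw [div_le_one hm0]; linarith
    linarith
  have hb1' : b < 1 := by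
    have : (1 : ℝ) / m ≤ 1 := by
      rw [div_le_one hm0]; linarith
    linarith
  have hr0 : (0 : ℝ) < max a (1 - m * a) := lt_max_of_lt_left ha0
  have hr1 : max a (1 - m * a) < 1 := max_lt ha1' (by nlinarith)
  have hs0 : (0 : ℝ) < max b (1 - m * b) := lt_max_of_lt_left hb0
  have hs1 : max b (1 - m * b) < 1 := max_lt hb1' (by nlinarith)
  -- the main quantitative continuity estimate
  have main : ∀ (ω : ℤ → Letter m) (p : ℝ × ℝ × ℝ), inA ω → Codes3 m a b p ω →
      ∀ ε : ℝ, 0 < ε → ∃ N : ℕ, ∀ (ω' : ℤ → Letter m) (q : ℝ × ℝ × ℝ),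
        Codes3 m a b q ω' → (∀ n : ℤ, |n| ≤ (N : ℤ) → ω' n = ω n) → dist q p < ε := by
    intro ω p hA hp ε hε
    obtain ⟨Nx, hNx⟩ : ∃ n : ℕ, (max a (1 - m * a)) ^ n < ε :=
      exists_pow_lt_of_lt_one hε hr1
    obtain ⟨Nz, hNz⟩ : ∃ n : ℕ, (max b (1 - m * b)) ^ n < ε :=
      exists_pow_lt_of_lt_one hε hs1
    obtain ⟨C, hC⟩ : ∃ n : ℕ, ((m : ℝ)⁻¹) ^ n < ε :=
      exists_pow_lt_of_lt_one hε (by rw [inv_lt_one_iff₀]; right; exact hm1)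
    obtain ⟨i, hiH⟩ : ∃ i : ℤ, Hfun ω i < -(C : ℤ) := by
      rcases hA with h | h
      · exact (h (-(C : ℤ))).exists
      · exact (h (-(C : ℤ))).exists
    refine ⟨max (max Nx Nz) i.natAbs, ?_⟩
    intro ω' q hq hag
    set N := max (max Nx Nz) i.natAbs with hN
    obtain ⟨hx, hy, hz⟩ := window_bound hm ha0 ha1 hb0 hb1 hp hq N hag
    have hiN : |i| ≤ (N : ℤ) := by
      rw [Int.abs_eq_natAbs]
      exact_mod_cast Nat.le_max_right (max Nx Nz) i.natAbs
    have hyb := hy i hiN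
    have hybe : |p.2.1 - q.2.1| < ε := by
      have h1 : (m : ℝ) ^ (Hfun ω i) ≤ (m : ℝ) ^ (-(C : ℤ)) :=
        zpow_le_zpow_right₀ (le_of_lt hm1) (le_of_lt hiH)
      have h2 : (m : ℝ) ^ (-(C : ℤ)) = ((m : ℝ)⁻¹) ^ C := by
        rw [zpow_neg, ← inv_zpow, zpow_natCast]
      linarith
    have hxe : |p.1 - q.1| < ε := by
      have h1 : (max a (1 - m * a)) ^ N ≤ (max a (1 - m * a)) ^ Nx :=
        pow_le_pow_of_le_one (le_of_lt hr0) (le_of_lt hr1)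
          (le_trans (Nat.le_max_left Nx Nz) (Nat.le_max_left _ _))
      linarith
    have hze : |p.2.2 - q.2.2| < ε := by
      have h1 : (max b (1 - m * b)) ^ N ≤ (max b (1 - m * b)) ^ Nz :=
        pow_le_pow_of_le_one (le_of_lt hs0) (le_of_lt hs1)
          (le_trans (Nat.le_max_right Nx Nz) (Nat.le_max_left _ _))
      linarith
    rw [Prod.dist_eq]
    apply max_lt
    · rw [Real.dist_eq, abs_sub_comm]; exact hxe
    · rw [Prod.dist_eq]
      apply max_lt
      · rw [Real.dist_eq, abs_sub_comm]; exact hybe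
      · rw [Real.dist_eq, abs_sub_comm]; exact hze
  constructor
  · intro ω _ hA p q hp hq
    have h0 : ∀ ε : ℝ, 0 < ε → dist q p < ε := by
      intro ε hε
      obtain ⟨N, hN⟩ := main ω p hA hp ε hε
      exact hN ω q hq (fun n _ => rfl)
    by_contra hne
    have hd : 0 < dist q p := dist_pos.mpr (fun h => hne h.symm)
    exact absurd (h0 _ hd) (lt_irrefl _)
  · intro ω p _ hA hp ε hε
    obtain ⟨N, hN⟩ := main ω p hA hp ε hε
    exact ⟨N, fun ω' q _ _ hq hag => hN ω' q hq hag⟩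
end

section
/- For the Bernoulli measure λ_α on {α₁,...,α_m, β}^ℤ assigning equal mass 1/(m+1) to each symbol, the set φ_α(B_α) of sequences in which every occurrence of β is matched (i.e. for every i with ω_i = β there exists k ≥ 1 with Ĥ_{α,i+1−k}(ω) = Ĥ_{α,i+1}(ω)) has full measure: λ_α(φ_α(B_α)) = 1. -/
/-- The alphabet `{α₁,…,α_m, β}` of `Σ_α`, realized as `Fin (m+1)`:
the symbols `i < m` are the left brackets `α_{i+1}` and `Fin.last m` is `β`. -/
abbrev AlphaLetter (m : ℕ) := Fin (m + 1)

/-- Sign of a symbol of `Σ_α`: `+1` on each `αᵢ` and `-1` on `β`. -/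
def asign (m : ℕ) (c : AlphaLetter m) : ℤ := if (c : ℕ) < m then 1 else -1

/-- The height function `Ĥ_{α,i}(ω)`: the signed count of `α`'s minus `β`'s
between positions `0` and `i`, with the paper's convention for negative `i`. -/
def Hhat (m : ℕ) (ω : ℤ → AlphaLetter m) (i : ℤ) : ℤ :=
  if 0 ≤ i then ∑ k ∈ Finset.range i.toNat, asign m (ω k)
  else -∑ k ∈ Finset.range (-i).toNat, asign m (ω (i + k))

open MeasureTheory ENNReal Finset


lemma asign_cases (m : ℕ) (c : AlphaLetter m) : asign m c = 1 ∨ asign m c = -1 := by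
  unfold asign; split <;> simp

lemma asign_last (m : ℕ) : asign m (Fin.last m) = -1 := by
  simp [asign]

lemma Hhat_succ (m : ℕ) (ω : ℤ → AlphaLetter m) (a : ℤ) :
    Hhat m ω (a + 1) = Hhat m ω a + asign m (ω a) := by
  unfold Hhat
  rcases lt_trichotomy a (-1) with h | h | h
  · rw [if_neg (by omega), if_neg (by omega)]
    have hN : (-a).toNat = (-(a+1)).toNat + 1 := by omega
    rw [hN, Finset.sum_range_succ']
    have h0 : ∀ k : ℕ, a + (k + 1 : ℕ) = (a + 1) + k := by intro k; push_cast; ring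
    simp only [h0, Nat.cast_zero, add_zero]
    ring
  · subst h
    rw [if_pos (by omega), if_neg (by omega)]
    norm_num [Finset.sum_range_one]
  · rw [if_pos (by omega), if_pos (by omega)]
    have hN : (a + 1).toNat = a.toNat + 1 := by omega
    rw [hN, Finset.sum_range_succ]
    have hcast : ((a.toNat : ℕ) : ℤ) = a := Int.toNat_of_nonneg (by omega)
    rw [hcast]

lemma Hhat_diff (m : ℕ) (ω : ℤ → AlphaLetter m) (i : ℤ) (k : ℕ) :
    Hhat m ω (i + 1) - Hhat m ω (i + 1 - k) = ∑ j ∈ Finset.range k, asign m (ω (i - j)) := by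
  induction k with
  | zero => simp
  | succ k ih =>
    have h1 : i + 1 - (k : ℕ) = (i - k) + 1 := by push_cast; ring
    have h2 : i + 1 - ((k : ℕ) + 1 : ℕ) = i - k := by push_cast; ring
    rw [Finset.sum_range_succ, ← ih, h2, h1, Hhat_succ m ω (i - k)]
    ring

lemma S_le (m : ℕ) (ω : ℤ → AlphaLetter m) (i : ℤ) (hβ : ω i = Fin.last m)
    (h : ∀ k : ℕ, 1 ≤ k → Hhat m ω (i + 1 - k) ≠ Hhat m ω (i + 1)) :
    ∀ k : ℕ, 1 ≤ k → ∑ j ∈ Finset.range k, asign m (ω (i - j)) ≤ -1 := by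
  have hne : ∀ k : ℕ, 1 ≤ k → ∑ j ∈ Finset.range k, asign m (ω (i - j)) ≠ 0 := by
    intro k hk hzero
    have := Hhat_diff m ω i k
    rw [hzero] at this
    exact h k hk (by omega)
  intro k
  induction k with
  | zero => omega
  | succ k ih =>
    intro _
    rcases Nat.eq_zero_or_pos k with rfl | hk
    · have : i - ((0:ℕ):ℤ) = i := by omega
      simp [Finset.sum_range_one, this, hβ, asign_last]
    · have h1 := ih hk
      have h2 := hne (k+1) (by omega)
      rw [Finset.sum_range_succ] at h2 ⊢
      rcases asign_cases m (ω (i - k)) with h3 | h3 <;> omega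


lemma count_bad (m n : ℕ) (hm : 1 ≤ m) :
    ((univ : Finset (Fin (2*n) → Fin (m+1))).filter
      (fun w => ∑ j, asign m (w j) ≤ -1)).card ≤ 4 ^ n * m ^ n := by
  classical
  set k := 2 * n with hk
  set bad : Finset (Fin k → Fin (m+1)) :=
    (univ : Finset (Fin k → Fin (m+1))).filter (fun w => ∑ j, asign m (w j) ≤ -1) with hbad
  set plusf : (Fin k → Fin (m+1)) → Finset (Fin k) :=
    fun w => univ.filter (fun j => ((w j : ℕ) < m)) with hplusf
  have hsum : ∀ w : Fin k → Fin (m+1),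
      ∑ j, asign m (w j) = ((plusf w).card : ℤ) - ((univ.filter (fun j => ¬((w j : ℕ) < m))).card : ℤ) := by
    intro w
    simp only [asign, plusf]
    rw [Finset.sum_ite, Finset.sum_const, Finset.sum_const]
    simp [sub_eq_add_neg]
  have hcards : ∀ w : Fin k → Fin (m+1),
      (plusf w).card + (univ.filter (fun j => ¬((w j : ℕ) < m))).card = k := by
    intro w
    rw [Finset.card_filter_add_card_filter_not]
    simp [Finset.card_univ]
  have hlt : ∀ w ∈ bad, (plusf w).card < n := by
    intro w hw
    have h1 : ∑ j, asign m (w j) ≤ -1 := (Finset.mem_filter.mp hw).2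
    rw [hsum w] at h1
    have h2 := hcards w
    omega
  set t : Finset (Finset (Fin k)) := (univ : Finset (Finset (Fin k))).filter (fun S => S.card < n) with ht
  have hmap : ∀ w ∈ bad, plusf w ∈ t := by
    intro w hw
    exact Finset.mem_filter.mpr ⟨Finset.mem_univ _, hlt w hw⟩
  rw [Finset.card_eq_sum_card_fiberwise hmap]
  have hfib : ∀ S ∈ t, (bad.filter (fun w => plusf w = S)).card ≤ m ^ n := by
    intro S hS
    have hScard : S.card < n := (Finset.mem_filter.mp hS).2
    have hinj : (bad.filter (fun w => plusf w = S)).card ≤ (univ : Finset (↥S → Fin m)).card := by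
      apply Finset.card_le_card_of_injOn
        (fun w => fun j : ↥S => if h : ((w j : ℕ) < m) then ⟨(w j : ℕ), h⟩ else ⟨0, hm⟩)
      · intro w _; exact Finset.mem_univ _
      · intro w₁ hw₁ w₂ hw₂ heq
        have hp₁ : plusf w₁ = S := (Finset.mem_filter.mp hw₁).2
        have hp₂ : plusf w₂ = S := (Finset.mem_filter.mp hw₂).2
        funext j
        by_cases hj : j ∈ S
        · have h₁ : ((w₁ j : ℕ) < m) := by
            have := hp₁ ▸ hj; simpa [plusf] using this
          have h₂ : ((w₂ j : ℕ) < m) := by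
            have := hp₂ ▸ hj; simpa [plusf] using this
          have := congrFun heq ⟨j, hj⟩
          simp only [dif_pos h₁, dif_pos h₂] at this
          simp only [Fin.mk.injEq] at this
          exact Fin.ext this
        · have h₁ : ¬((w₁ j : ℕ) < m) := by
            intro hc
            exact hj (hp₁ ▸ (Finset.mem_filter.mpr ⟨Finset.mem_univ _, hc⟩))
          have h₂ : ¬((w₂ j : ℕ) < m) := by
            intro hc
            exact hj (hp₂ ▸ (Finset.mem_filter.mpr ⟨Finset.mem_univ _, hc⟩))
          have hv₁' : (w₁ j : ℕ) = m := by have := (w₁ j).isLt; omega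
          have hv₂ : (w₂ j : ℕ) = m := by have := (w₂ j).isLt; omega
          exact Fin.ext (hv₁'.trans hv₂.symm)
    calc (bad.filter (fun w => plusf w = S)).card
        ≤ (univ : Finset (↥S → Fin m)).card := hinj
      _ = m ^ S.card := by
          rw [Finset.card_univ, Fintype.card_fun, Fintype.card_fin, Fintype.card_coe]
      _ ≤ m ^ n := Nat.pow_le_pow_right hm (le_of_lt hScard)
  calc ∑ S ∈ t, (bad.filter (fun w => plusf w = S)).card
      ≤ ∑ _S ∈ t, m ^ n := Finset.sum_le_sum hfib
    _ = t.card * m ^ n := by rw [Finset.sum_const, smul_eq_mul]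
    _ ≤ 2 ^ k * m ^ n := by
        apply Nat.mul_le_mul_right
        calc t.card ≤ (univ : Finset (Finset (Fin k))).card := Finset.card_filter_le _ _
          _ = 2 ^ k := by rw [Finset.card_univ, Fintype.card_finset, Fintype.card_fin]
    _ = 4 ^ n * m ^ n := by
        congr 1
        rw [hk, pow_mul]
        norm_num


lemma cyl_measure (m : ℕ) (lam : Measure (ℤ → AlphaLetter m))
    (hcyl : ∀ (F : Finset ℤ) (g : ℤ → AlphaLetter m),
      lam {ω | ∀ i ∈ F, ω i = g i} = (((m : ℝ≥0∞) + 1)⁻¹) ^ F.card)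
    (i : ℤ) (k : ℕ) (w : Fin k → Fin (m+1)) :
    lam {ω | ∀ j : Fin k, ω (i - (j : ℕ)) = w j} = (((m : ℝ≥0∞) + 1)⁻¹) ^ k := by
  classical
  set F : Finset ℤ := (Finset.range k).image (fun j : ℕ => i - (j : ℕ)) with hF
  set g : ℤ → Fin (m+1) := fun x =>
    if h : (i - x).toNat < k then w ⟨(i - x).toNat, h⟩ else Fin.last m with hg
  have hFcard : F.card = k := by
    rw [hF, Finset.card_image_of_injOn, Finset.card_range]
    intro a _ b _ hab
    have hab' : i - (a : ℤ) = i - (b : ℤ) := hab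
    omega
  have hset : {ω : ℤ → AlphaLetter m | ∀ x ∈ F, ω x = g x}
      = {ω : ℤ → AlphaLetter m | ∀ j : Fin k, ω (i - (j : ℕ)) = w j} := by
    ext ω
    simp only [Set.mem_setOf_eq]
    constructor
    · intro h j
      have hx : (i - ((j : ℕ) : ℤ)) ∈ F := by
        rw [hF]
        exact Finset.mem_image.mpr ⟨(j : ℕ), Finset.mem_range.mpr j.isLt, rfl⟩
      have h1 := h _ hx
      have h2 : (i - (i - ((j : ℕ) : ℤ))).toNat = (j : ℕ) := by omega
      rw [h1, hg]
      simp only [h2, j.isLt, dif_pos]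
    · intro h x hx
      rw [hF] at hx
      obtain ⟨j, hj, rfl⟩ := Finset.mem_image.mp hx
      have hjk : j < k := Finset.mem_range.mp hj
      have h1 := h ⟨j, hjk⟩
      have h2 : (i - (i - (j : ℤ))).toNat = j := by omega
      rw [hg]
      simp only [h2, hjk, dif_pos]
      exact h1
  rw [← hset, hcyl F g, hFcard]

/-- For the uniform Bernoulli measure `λ_α` on
`{α₁,…,α_m,β}^ℤ` (characterized by giving each cylinder on a finite set `F` of
coordinates measure `(1/(m+1))^{|F|}`), the set of sequences in which every
occurrence of `β` is matched has full measure. -/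
theorem bernoulli_matched_full_measure (m : ℕ) (hm : 2 ≤ m)
    (lam : Measure (ℤ → AlphaLetter m)) [IsProbabilityMeasure lam]
    (hcyl : ∀ (F : Finset ℤ) (g : ℤ → AlphaLetter m),
      lam {ω | ∀ i ∈ F, ω i = g i} = (((m : ℝ≥0∞) + 1)⁻¹) ^ F.card) :
    lam {ω | ∀ i : ℤ, ω i = Fin.last m →
      ∃ k : ℕ, 1 ≤ k ∧ Hhat m ω (i + 1 - k) = Hhat m ω (i + 1)} = 1 := by
  classical
  have hm1 : 1 ≤ m := le_trans one_le_two hm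
  set T : Set (ℤ → AlphaLetter m) := {ω | ∀ i : ℤ, ω i = Fin.last m →
      ∃ k : ℕ, 1 ≤ k ∧ Hhat m ω (i + 1 - k) = Hhat m ω (i + 1)} with hT
  set Bad : ℤ → Set (ℤ → AlphaLetter m) := fun i =>
    {ω | ω i = Fin.last m ∧ ∀ k : ℕ, 1 ≤ k → Hhat m ω (i + 1 - k) ≠ Hhat m ω (i + 1)} with hBad
  -- the ratio
  set r : ℝ≥0∞ := (4 * m) * (((m : ℝ≥0∞) + 1)⁻¹) ^ 2 with hr
  have hfin : ((m : ℝ≥0∞) + 1) ^ 2 ≠ ∞ := by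
    apply pow_ne_top
    simp [ENNReal.add_ne_top]
  have h0 : ((m : ℝ≥0∞) + 1) ^ 2 ≠ 0 := by
    apply pow_ne_zero
    have h1 : (0 : ℝ≥0∞) < (m : ℝ≥0∞) + 1 :=
      lt_of_lt_of_le zero_lt_one (le_add_self)
    exact h1.ne'
  have hrlt : r < 1 := by
    rw [hr, ← ENNReal.inv_pow, ← div_eq_mul_inv]
    rw [ENNReal.div_lt_iff (Or.inl h0) (Or.inl hfin)]
    rw [one_mul]
    have hnat : 4 * m < (m + 1) ^ 2 := by nlinarith
    calc (4 : ℝ≥0∞) * m = ((4 * m : ℕ) : ℝ≥0∞) := by push_cast; ring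
      _ < (((m + 1) ^ 2 : ℕ) : ℝ≥0∞) := by exact_mod_cast hnat
      _ = ((m : ℝ≥0∞) + 1) ^ 2 := by push_cast; ring
  have key : ∀ i : ℤ, lam (Bad i) = 0 := by
    intro i
    have hbound : ∀ n : ℕ, lam (Bad i) ≤ r ^ n := by
      intro n
      cases n with
      | zero => simpa using prob_le_one
      | succ n =>
        set N := n + 1 with hN
        set k := 2 * N with hk2
        set badW : Finset (Fin k → Fin (m+1)) :=
          (univ : Finset (Fin k → Fin (m+1))).filter (fun w => ∑ j, asign m (w j) ≤ -1) with hbadW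
        have hsub : Bad i ⊆ ⋃ w ∈ badW, {ω : ℤ → AlphaLetter m | ∀ j : Fin k, ω (i - (j : ℕ)) = w j} := by
          intro ω hω
          obtain ⟨hβ, hne⟩ := hω
          have hS := S_le m ω i hβ hne k (by omega)
          refine Set.mem_iUnion₂.mpr ⟨fun j : Fin k => ω (i - (j : ℕ)), ?_, ?_⟩
          · rw [hbadW]
            refine Finset.mem_filter.mpr ⟨Finset.mem_univ _, ?_⟩
            rw [Fin.sum_univ_eq_sum_range (fun j => asign m (ω (i - (j : ℕ)))) k]
            exact hS
          · intro j
            rfl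
        calc lam (Bad i) ≤ ∑ w ∈ badW, lam {ω : ℤ → AlphaLetter m | ∀ j : Fin k, ω (i - (j : ℕ)) = w j} :=
              le_trans (measure_mono hsub) (measure_biUnion_finset_le _ _)
          _ = ∑ _w ∈ badW, (((m : ℝ≥0∞) + 1)⁻¹) ^ k := by
              apply Finset.sum_congr rfl
              intro w _
              exact cyl_measure m lam hcyl i k w
          _ = (badW.card : ℝ≥0∞) * (((m : ℝ≥0∞) + 1)⁻¹) ^ k := by
              rw [Finset.sum_const, nsmul_eq_mul]
          _ ≤ ((4 ^ N * m ^ N : ℕ) : ℝ≥0∞) * (((m : ℝ≥0∞) + 1)⁻¹) ^ k := by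
              apply mul_le_mul_left
              exact_mod_cast count_bad m N hm1
          _ = r ^ N := by
              rw [hr, hk2]
              push_cast
              rw [mul_pow, mul_pow, ← pow_mul]
    have htend : Filter.Tendsto (fun n : ℕ => r ^ n) Filter.atTop (nhds 0) :=
      ENNReal.tendsto_pow_atTop_nhds_zero_of_lt_one hrlt
    have hle : lam (Bad i) ≤ 0 := ge_of_tendsto' htend hbound
    exact le_antisymm hle zero_le
  have hUnull : lam (⋃ i : ℤ, Bad i) = 0 := measure_iUnion_null key
  have hcomplsub : Tᶜ ⊆ ⋃ i : ℤ, Bad i := by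
    intro ω hω
    simp only [hT, Set.mem_compl_iff, Set.mem_setOf_eq, not_forall] at hω
    obtain ⟨i, hβ, hno⟩ := hω
    push_neg at hno
    exact Set.mem_iUnion.mpr ⟨i, ⟨hβ, fun k hk => hno k hk⟩⟩
  have hcompl : lam Tᶜ = 0 := measure_mono_null hcomplsub hUnull
  have h1 : (1 : ℝ≥0∞) ≤ lam T := by
    have : lam Set.univ ≤ lam T + lam Tᶜ := by
      rw [← Set.union_compl_self T]
      exact measure_union_le T Tᶜ
    rw [measure_univ, hcompl, add_zero] at this
    exact this
  exact le_antisymm prob_le_one h1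
end
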